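/- arXiv:2303.01066 — 7 statements merged into one kernel-verified Lean document; each statement's English description precedes it below -/
import Mathlib

section
/- Every element of G has a left inverse for ⊕, given explicitly by: for x ∈ P, (⊖x) ⊕ x = 0 where ⊖x ∈ P is the unique element with ⊖x ≡ −x (mod m); and for x = t + m ∈ H with t ∈ P, (⊖x) ⊕ x = 0 where ⊖x = (−t mod m) + m ∈ H. -/
open scoped Classical

noncomputable section

/-- `m = 2^(n-1)` -/
def m (n : ℕ) : ℤ := 2 ^ (n - 1)

/-- `P = {0, 1, ..., m-1}` -/
def Pset (n : ℕ) : Set ℤ := {x | 0 ≤ x ∧ x < m n}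

/-- `H = {m, m+1, ..., 2m-1}` -/
def Hset (n : ℕ) : Set ℤ := {x | m n ≤ x ∧ x < 2 * m n}

/-- `G = {0, 1, ..., 2^n - 1}` -/
def Gset (n : ℕ) : Set ℤ := {x | 0 ≤ x ∧ x < 2 ^ n}

/-- odd elements of `P` -/
def OP (n : ℕ) : Set ℤ := {x | x ∈ Pset n ∧ Odd x}

/-- even elements of `P` -/
def EP (n : ℕ) : Set ℤ := {x | x ∈ Pset n ∧ Even x}

/-- odd elements of `H` -/
def OH (n : ℕ) : Set ℤ := {x | x ∈ Hset n ∧ Odd x}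

/-- even elements of `H` -/
def EH (n : ℕ) : Set ℤ := {x | x ∈ Hset n ∧ Even x}

/-- The binary operation `⊕` on `G`.  Here `(i+j) % m n` is the unique `t ∈ P` with
`t ≡ i + j (mod m)` and `(i+j+m/2) % m n` is the unique `s ∈ P` with `s ≡ i+j+m/2 (mod m)`. -/
def oplus (n : ℕ) (i j : ℤ) : ℤ :=
  if i ∈ EH n ∧ j ∈ OH n then (i + j + m n / 2) % m n
  else if i ∈ EH n ∧ j ∈ OP n then (i + j + m n / 2) % m n + m n
  else if (i ∈ Pset n ∧ j ∈ Pset n) ∨ (i ∈ Hset n ∧ j ∈ Hset n) then (i + j) % m n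
  else (i + j) % m n + m n

/-- The map `A : G → G`; `(i + m/2) % m n` is the unique `r ∈ P` with `r ≡ i + m/2 (mod m)`. -/
def Amap (n : ℕ) (i : ℤ) : ℤ :=
  if i ∈ OP n then (i + m n / 2) % m n
  else if i ∈ OH n then (i + m n / 2) % m n + m n
  else i

/-- `M = (O_P × (O_H ∪ E_H)) ∪ (O_H × (O_P ∪ E_H)) ∪ (E_H × (O_P ∪ O_H))` -/
def Mset (n : ℕ) : Set (ℤ × ℤ) :=
  (OP n ×ˢ (OH n ∪ EH n)) ∪ (OH n ×ˢ (OP n ∪ EH n)) ∪ (EH n ×ˢ (OP n ∪ OH n))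

/-- `gyr(a,b) = A` if `(a,b) ∈ M`, and the identity otherwise. -/
def gyr (n : ℕ) (a b : ℤ) : ℤ → ℤ :=
  if (a, b) ∈ Mset n then Amap n else id

/-- explicit left inverses for `⊕`. -/
theorem stmt6 (n : ℕ) (hn : 3 ≤ n) :
    (∀ x ∈ Pset n, oplus n ((-x) % m n) x = 0) ∧
      (∀ t ∈ Pset n, oplus n ((-t) % m n + m n) (t + m n) = 0) := by
  have hm : (0:ℤ) < m n := by unfold m; positivity
  have h2 : (2:ℤ) ∣ m n := by
    unfold m
    exact dvd_pow_self 2 (by omega)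
  constructor
  · intro x hx
    have hy0 : 0 ≤ (-x) % m n := Int.emod_nonneg _ (ne_of_gt hm)
    have hy1 : (-x) % m n < m n := Int.emod_lt_of_pos _ hm
    have hyH : (-x) % m n ∉ Hset n := fun h => absurd h.1 (not_le.mpr hy1)
    unfold oplus
    rw [if_neg, if_neg, if_pos]
    · rw [Int.emod_add_emod]
      simp
    · exact Or.inl ⟨⟨hy0, hy1⟩, hx⟩
    · rintro ⟨⟨h, _⟩, _⟩; exact hyH h
    · rintro ⟨⟨h, _⟩, _⟩; exact hyH h
  · intro t ht
    obtain ⟨ht0, ht1⟩ := ht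
    have hy0 : 0 ≤ (-t) % m n := Int.emod_nonneg _ (ne_of_gt hm)
    have hy1 : (-t) % m n < m n := Int.emod_lt_of_pos _ hm
    have hpar : ((-t) % m n) % 2 = (-t) % 2 := Int.emod_emod_of_dvd _ h2
    obtain ⟨k, hk⟩ := h2
    unfold oplus
    rw [if_neg, if_neg, if_pos]
    · rw [add_assoc, Int.emod_add_emod,
        show -t + (m n + (t + m n)) = m n * 2 from by ring, Int.mul_emod_right]
    · exact Or.inr ⟨⟨by omega, by omega⟩, ⟨by omega, by omega⟩⟩
    · rintro ⟨_, ⟨⟨h, _⟩, _⟩⟩; omega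
    · rintro ⟨⟨_, hye⟩, _, hxo⟩
      rw [Int.even_iff] at hye
      rw [Int.odd_iff] at hxo
      omega
end
end

section
/- For all a, b ∈ G, the map gyr(a,b) : G → G is an automorphism of (G, ⊕): it is a bijection of G and satisfies gyr(a,b)(x ⊕ y) = gyr(a,b)(x) ⊕ gyr(a,b)(y) for all x, y ∈ G. -/
open scoped Classical

noncomputable section

/-- Characterize `a % (2*k)` for `0 ≤ a < 10*k` as a disjunction of linear facts. -/
lemma emodc (k a : ℤ) (hk : 0 < k) (h0 : 0 ≤ a) (h : a < 10 * k) :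
    0 ≤ a % (2 * k) ∧ a % (2 * k) < 2 * k ∧
      (a % (2 * k) = a ∨ a % (2 * k) = a - 2 * k ∨ a % (2 * k) = a - 4 * k ∨
        a % (2 * k) = a - 6 * k ∨ a % (2 * k) = a - 8 * k) := by
  have h2k : (0:ℤ) < 2 * k := by omega
  have hdef : a % (2 * k) = a - 2 * k * (a / (2 * k)) := by rw [Int.emod_def]
  have hq0 : 0 ≤ a / (2 * k) := Int.ediv_nonneg h0 (le_of_lt h2k)
  have hq5 : a / (2 * k) < 5 := (Int.ediv_lt_iff_lt_mul h2k).mpr (by linarith)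
  have hlo := Int.emod_nonneg a (ne_of_gt h2k)
  have hhi := Int.emod_lt_of_pos a h2k
  rcases (by omega : a / (2*k) = 0 ∨ a / (2*k) = 1 ∨ a / (2*k) = 2 ∨ a / (2*k) = 3 ∨ a / (2*k) = 4) with
    h5 | h5 | h5 | h5 | h5 <;> rw [h5] at hdef <;> omega

def rmod (k a : ℤ) : ℤ :=
  if a < 2*k then a else if a < 4*k then a - 2*k else if a < 6*k then a - 4*k else if a < 8*k then a - 6*k else a - 8*k
def A' (k x : ℤ) : ℤ := if x % 2 = 1 then rmod k (x + k) + (if x < 2*k then 0 else 2*k) else x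
def op' (k x y : ℤ) : ℤ :=
  if 2*k ≤ x ∧ x % 2 = 0 ∧ 2*k ≤ y ∧ y % 2 = 1 then rmod k (x+y+k)
  else if 2*k ≤ x ∧ x % 2 = 0 ∧ y < 2*k ∧ y % 2 = 1 then rmod k (x+y+k) + 2*k
  else if (x < 2*k ∧ y < 2*k) ∨ (2*k ≤ x ∧ 2*k ≤ y) then rmod k (x+y)
  else rmod k (x+y) + 2*k

lemma A'_cases (k x : ℤ) (hk2 : k % 2 = 0) (hk : 0 < k) (hx : 0 ≤ x) (hx2 : x < 4*k) :
    0 ≤ A' k x ∧ A' k x < 4*k ∧ (2*k ≤ A' k x ↔ 2*k ≤ x) ∧ A' k x % 2 = x % 2 ∧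
      ((x % 2 = 1 ∧ (A' k x = x + k ∨ A' k x = x - k)) ∨ (x % 2 = 0 ∧ A' k x = x)) := by
  simp only [A', rmod]; split_ifs <;> omega

lemma op'_cases (k x y : ℤ) (hk2 : k % 2 = 0) (hk : 0 < k) (hx : 0 ≤ x) (hx2 : x < 4*k)
    (hy : 0 ≤ y) (hy2 : y < 4*k) :
    0 ≤ op' k x y ∧ op' k x y < 4*k ∧
      (2*k ≤ op' k x y ↔ ((x < 2*k ∧ 2*k ≤ y) ∨ (2*k ≤ x ∧ y < 2*k))) ∧
      (((x % 2 = 0 ∧ y % 2 = 1 ∧ 2*k ≤ x) ∧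
          (op' k x y = x+y+k ∨ op' k x y = x+y+k-2*k ∨ op' k x y = x+y+k-4*k ∨
            op' k x y = x+y+k-6*k ∨ op' k x y = x+y+k-8*k ∨ op' k x y = x+y+3*k)) ∨
        (¬(x % 2 = 0 ∧ y % 2 = 1 ∧ 2*k ≤ x) ∧
          (op' k x y = x+y ∨ op' k x y = x+y-2*k ∨ op' k x y = x+y-4*k ∨
            op' k x y = x+y-6*k ∨ op' k x y = x+y+2*k))) := by
  simp only [op', rmod]; split_ifs <;> omega

lemma A'_invol (k x : ℤ) (hk2 : k % 2 = 0) (hk : 0 < k) (hx : 0 ≤ x) (hx2 : x < 4*k) :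
    A' k (A' k x) = x := by
  have H1 := A'_cases k x hk2 hk hx hx2
  have H2 := A'_cases k (A' k x) hk2 hk (by omega) (by omega)
  omega


/-- characterization of `A'` as a predicate in fresh variables -/
lemma rmod_fact (k a : ℤ) (hk : 0 < k) (h0 : 0 ≤ a) (h : a < 10*k) :
    (a < 2*k ∧ rmod k a = a) ∨ (2*k ≤ a ∧ a < 4*k ∧ rmod k a = a - 2*k) ∨
    (4*k ≤ a ∧ a < 6*k ∧ rmod k a = a - 4*k) ∨ (6*k ≤ a ∧ a < 8*k ∧ rmod k a = a - 6*k) ∨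
    (8*k ≤ a ∧ rmod k a = a - 8*k) := by
  unfold rmod; split_ifs <;> omega

def Achar (k x a : ℤ) : Prop :=
  0 ≤ a ∧ a < 4*k ∧
    ((x % 2 = 1 ∧ x < 2*k ∧ x + k < 2*k ∧ a = x + k) ∨
     (x % 2 = 1 ∧ x < 2*k ∧ 2*k ≤ x + k ∧ a = x - k) ∨
     (x % 2 = 1 ∧ 2*k ≤ x ∧ x + k < 4*k ∧ a = x + k) ∨
     (x % 2 = 1 ∧ 2*k ≤ x ∧ 4*k ≤ x + k ∧ a = x - k) ∨
     (x % 2 = 0 ∧ a = x))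

def Ochar (k x y v : ℤ) : Prop :=
  0 ≤ v ∧ v < 4*k ∧
    ((2*k ≤ x ∧ x % 2 = 0 ∧ 2*k ≤ y ∧ y % 2 = 1 ∧
       ((x+y+k < 6*k ∧ v = x+y+k-4*k) ∨ (6*k ≤ x+y+k ∧ x+y+k < 8*k ∧ v = x+y+k-6*k) ∨
        (8*k ≤ x+y+k ∧ v = x+y+k-8*k))) ∨
     (2*k ≤ x ∧ x % 2 = 0 ∧ y < 2*k ∧ y % 2 = 1 ∧
       ((x+y+k < 4*k ∧ v = x+y+k) ∨ (4*k ≤ x+y+k ∧ x+y+k < 6*k ∧ v = x+y+k-2*k) ∨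
        (6*k ≤ x+y+k ∧ v = x+y+k-4*k))) ∨
     (¬(x % 2 = 0 ∧ y % 2 = 1 ∧ 2*k ≤ x) ∧ ((x < 2*k ∧ y < 2*k) ∨ (2*k ≤ x ∧ 2*k ≤ y)) ∧
       ((x+y < 2*k ∧ v = x+y) ∨ (2*k ≤ x+y ∧ x+y < 4*k ∧ v = x+y-2*k) ∨
        (4*k ≤ x+y ∧ x+y < 6*k ∧ v = x+y-4*k) ∨ (6*k ≤ x+y ∧ v = x+y-6*k))) ∨
     (¬(x % 2 = 0 ∧ y % 2 = 1 ∧ 2*k ≤ x) ∧ ¬((x < 2*k ∧ y < 2*k) ∨ (2*k ≤ x ∧ 2*k ≤ y)) ∧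
       ((x+y < 4*k ∧ v = x+y) ∨ (4*k ≤ x+y ∧ v = x+y-2*k))))

/-- common characterization of both sides of the automorphism identity -/
def Fchar (k x y w : ℤ) : Prop :=
  0 ≤ w ∧ w < 4*k ∧ (2*k ≤ w ↔ ((x < 2*k ∧ 2*k ≤ y) ∨ (2*k ≤ x ∧ y < 2*k))) ∧
    (((x+y) % 2 = 1 ∧ ¬(x % 2 = 0 ∧ y % 2 = 1 ∧ 2*k ≤ x) ∧
       (w = x+y+k ∨ w = x+y+k-2*k ∨ w = x+y+k-4*k ∨ w = x+y+k-6*k ∨ w = x+y+k-8*k)) ∨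
     (((x+y) % 2 = 0 ∨ (x % 2 = 0 ∧ y % 2 = 1 ∧ 2*k ≤ x)) ∧
       (w = x+y ∨ w = x+y-2*k ∨ w = x+y-4*k ∨ w = x+y-6*k)))

lemma Achar_of (k x : ℤ) (hk2 : k % 2 = 0) (hk : 0 < k) (hx : 0 ≤ x) (hx2 : x < 4*k) :
    Achar k x (A' k x) := by
  unfold Achar A' rmod; split_ifs <;> omega

set_option maxHeartbeats 2000000 in
lemma Ochar_of (k x y : ℤ) (hk2 : k % 2 = 0) (hk : 0 < k) (hx : 0 ≤ x) (hx2 : x < 4*k)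
    (hy : 0 ≤ y) (hy2 : y < 4*k) : Ochar k x y (op' k x y) := by
  unfold Ochar op'
  split_ifs with h1 h2 h3
  · have R1 := rmod_fact k (x+y+k) hk (by omega) (by omega)
    exact ⟨by omega, by omega, Or.inl (by omega)⟩
  · have R1 := rmod_fact k (x+y+k) hk (by omega) (by omega)
    exact ⟨by omega, by omega, Or.inr (Or.inl (by omega))⟩
  · have R2 := rmod_fact k (x+y) hk (by omega) (by omega)
    exact ⟨by omega, by omega, Or.inr (Or.inr (Or.inl (by omega)))⟩
  · have R2 := rmod_fact k (x+y) hk (by omega) (by omega)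
    exact ⟨by omega, by omega, Or.inr (Or.inr (Or.inr (by omega)))⟩

lemma stepL (k x y v L : ℤ) (hk2 : k % 2 = 0) (hk : 0 < k)
    (hx : 0 ≤ x) (hx2 : x < 4*k) (hy : 0 ≤ y) (hy2 : y < 4*k)
    (Hv : Ochar k x y v) (HL : Achar k v L) : Fchar k x y L := by
  unfold Ochar at Hv; unfold Achar at HL; unfold Fchar
  obtain ⟨v1, v2, Hv⟩ := Hv
  obtain ⟨l1, l2, HL⟩ := HL
  rcases Hv with ⟨c1,c2,c3,c4,Hv|Hv|Hv⟩|⟨c1,c2,c3,c4,Hv|Hv|Hv⟩|⟨c1,c2,Hv|Hv|Hv|Hv⟩|⟨c1,c2,Hv|Hv⟩ <;>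
    rcases HL with ⟨e1,e2,e3,HL⟩|⟨e1,e2,e3,HL⟩|⟨e1,e2,e3,HL⟩|⟨e1,e2,e3,HL⟩|⟨e1,HL⟩ <;> omega

set_option maxHeartbeats 4000000 in
lemma stepR (k x y ax ay R : ℤ) (hk2 : k % 2 = 0) (hk : 0 < k)
    (hx : 0 ≤ x) (hx2 : x < 4*k) (hy : 0 ≤ y) (hy2 : y < 4*k)
    (Hx : Achar k x ax) (Hy : Achar k y ay) (HR : Ochar k ax ay R) : Fchar k x y R := by
  unfold Achar at Hx Hy; unfold Ochar at HR; unfold Fchar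
  obtain ⟨a1, a2, Hx⟩ := Hx
  obtain ⟨b1, b2, Hy⟩ := Hy
  rcases Hx with ⟨p1,p2,p3,Hx⟩|⟨p1,p2,p3,Hx⟩|⟨p1,p2,p3,Hx⟩|⟨p1,p2,p3,Hx⟩|⟨p1,Hx⟩ <;>
    rcases Hy with ⟨q1,q2,q3,Hy⟩|⟨q1,q2,q3,Hy⟩|⟨q1,q2,q3,Hy⟩|⟨q1,q2,q3,Hy⟩|⟨q1,Hy⟩ <;>
    obtain ⟨r1, r2, HR⟩ := HR <;>
    rcases HR with ⟨c1,c2,c3,c4,HR|HR|HR⟩|⟨c1,c2,c3,c4,HR|HR|HR⟩|⟨c1,c2,HR|HR|HR|HR⟩|⟨c1,c2,HR|HR⟩ <;>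
    omega

lemma uniqF (k x y L R : ℤ) (hk2 : k % 2 = 0) (hk : 0 < k)
    (HL : Fchar k x y L) (HR : Fchar k x y R) : L = R := by
  unfold Fchar at HL HR
  obtain ⟨l1,l2,l3,HL⟩ := HL
  obtain ⟨r1,r2,r3,HR⟩ := HR
  rcases HL with ⟨e1,e2,HL⟩|⟨e1,HL⟩ <;> rcases HR with ⟨f1,f2,HR⟩|⟨f1,HR⟩ <;> omega

lemma key_hom (k x y : ℤ) (hk2 : k % 2 = 0) (hk : 0 < k) (hx : 0 ≤ x) (hx2 : x < 4*k)
    (hy : 0 ≤ y) (hy2 : y < 4*k) : A' k (op' k x y) = op' k (A' k x) (A' k y) := by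
  have Hx := Achar_of k x hk2 hk hx hx2
  have Hy := Achar_of k y hk2 hk hy hy2
  have Hv := Ochar_of k x y hk2 hk hx hx2 hy hy2
  have HL := Achar_of k (op' k x y) hk2 hk Hv.1 Hv.2.1
  have HR := Ochar_of k (A' k x) (A' k y) hk2 hk Hx.1 Hx.2.1 Hy.1 Hy.2.1
  exact uniqF k x y _ _ hk2 hk (stepL k x y _ _ hk2 hk hx hx2 hy hy2 Hv HL)
    (stepR k x y _ _ _ hk2 hk hx hx2 hy hy2 Hx Hy HR)

lemma key_exists (n : ℕ) (hn : 3 ≤ n) :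
    ∃ k : ℤ, m n = 2 * k ∧ m n / 2 = k ∧ k % 2 = 0 ∧ 0 < k ∧ (2:ℤ)^n = 4 * k := by
  refine ⟨2 * 2^(n-3), ?_, ?_, by omega, by positivity, ?_⟩
  · show (2:ℤ)^(n-1) = _
    rw [show n-1 = (n-3)+2 by omega, pow_add]; ring
  · show (2:ℤ)^(n-1) / 2 = _
    rw [show n-1 = (n-3)+2 by omega, pow_add]
    have : (0:ℤ) < 2^(n-3) := by positivity
    omega
  · conv_lhs => rw [show n = (n-3)+3 by omega]
    rw [pow_add]; ring


lemma Amap_eq (n : ℕ) (k x : ℤ) (hm : m n = 2*k) (hd : m n / 2 = k) (hk2 : k % 2 = 0)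
    (hk : 0 < k) (hx : 0 ≤ x) (hx2 : x < 4*k) : Amap n x = A' k x := by
  have v : (x + k) % (2*k) = rmod k (x+k) := by
    have := emodc k (x+k) hk (by omega) (by omega)
    unfold rmod; split_ifs <;> omega
  have e1 : x ∈ OP n ↔ (x < 2*k ∧ x % 2 = 1) := by
    simp only [OP, Pset, Set.mem_setOf_eq, Int.odd_iff, hm]; omega
  have e2 : x ∈ OH n ↔ (2*k ≤ x ∧ x % 2 = 1) := by
    simp only [OH, Hset, Set.mem_setOf_eq, Int.odd_iff, hm]; omega
  simp only [Amap]
  simp only [hd]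
  simp only [hm]
  simp only [e1, e2, v, A']
  all_goals (split_ifs <;> omega)

lemma oplus_eq (n : ℕ) (k x y : ℤ) (hm : m n = 2*k) (hd : m n / 2 = k) (hk2 : k % 2 = 0)
    (hk : 0 < k) (hx : 0 ≤ x) (hx2 : x < 4*k) (hy : 0 ≤ y) (hy2 : y < 4*k) :
    oplus n x y = op' k x y := by
  have v1 : (x + y + k) % (2*k) = rmod k (x+y+k) := by
    have := emodc k (x+y+k) hk (by omega) (by omega)
    unfold rmod; split_ifs <;> omega
  have v2 : (x + y) % (2*k) = rmod k (x+y) := by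
    have := emodc k (x+y) hk (by omega) (by omega)
    unfold rmod; split_ifs <;> omega
  have c1 : (x ∈ EH n ∧ y ∈ OH n) ↔ (2*k ≤ x ∧ x % 2 = 0 ∧ 2*k ≤ y ∧ y % 2 = 1) := by
    simp only [EH, OH, Hset, Set.mem_setOf_eq, Int.odd_iff, Int.even_iff, hm]; omega
  have c2 : (x ∈ EH n ∧ y ∈ OP n) ↔ (2*k ≤ x ∧ x % 2 = 0 ∧ y < 2*k ∧ y % 2 = 1) := by
    simp only [EH, OP, Hset, Pset, Set.mem_setOf_eq, Int.odd_iff, Int.even_iff, hm]; omega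
  have c3 : ((x ∈ Pset n ∧ y ∈ Pset n) ∨ (x ∈ Hset n ∧ y ∈ Hset n)) ↔
      ((x < 2*k ∧ y < 2*k) ∨ (2*k ≤ x ∧ 2*k ≤ y)) := by
    simp only [Pset, Hset, Set.mem_setOf_eq, hm]; omega
  simp only [oplus]
  simp only [hd]
  simp only [hm]
  simp only [c1, c2, c3, v1, v2, op']
  all_goals (split_ifs <;> omega)

theorem stmt7' (n : ℕ) (hn : 3 ≤ n) :
    ∀ a ∈ Gset n, ∀ b ∈ Gset n,
      Set.BijOn (gyr n a b) (Gset n) (Gset n) ∧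
        ∀ x ∈ Gset n, ∀ y ∈ Gset n,
          gyr n a b (oplus n x y) = oplus n (gyr n a b x) (gyr n a b y) := by
  obtain ⟨k, hm, hd, hk2, hk, h2n⟩ := key_exists n hn
  have hG : ∀ z : ℤ, z ∈ Gset n ↔ 0 ≤ z ∧ z < 4*k := by
    intro z; rw [show ((4:ℤ)*k) = 2^n from h2n.symm]; exact Iff.rfl
  have hmem : ∀ x ∈ Gset n, Amap n x ∈ Gset n := by
    intro x hx
    obtain ⟨h1, h2⟩ := (hG x).1 hx
    rw [Amap_eq n k x hm hd hk2 hk h1 h2]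
    have := A'_cases k x hk2 hk h1 h2
    exact (hG _).2 ⟨this.1, this.2.1⟩
  have hinv : ∀ x ∈ Gset n, Amap n (Amap n x) = x := by
    intro x hx
    obtain ⟨h1, h2⟩ := (hG x).1 hx
    have HA := A'_cases k x hk2 hk h1 h2
    rw [Amap_eq n k x hm hd hk2 hk h1 h2,
      Amap_eq n k (A' k x) hm hd hk2 hk HA.1 HA.2.1]
    exact A'_invol k x hk2 hk h1 h2
  intro a _ b _
  by_cases hM : (a, b) ∈ Mset n
  · constructor
    · simp only [gyr, if_pos hM]
      exact Set.InvOn.bijOn ⟨fun x hx => hinv x hx, fun x hx => hinv x hx⟩ hmem hmem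
    · intro x hx y hy
      simp only [gyr, if_pos hM]
      obtain ⟨hx1, hx2⟩ := (hG x).1 hx
      obtain ⟨hy1, hy2⟩ := (hG y).1 hy
      have Hv := op'_cases k x y hk2 hk hx1 hx2 hy1 hy2
      have HAx := A'_cases k x hk2 hk hx1 hx2
      have HAy := A'_cases k y hk2 hk hy1 hy2
      rw [oplus_eq n k x y hm hd hk2 hk hx1 hx2 hy1 hy2,
        Amap_eq n k (op' k x y) hm hd hk2 hk Hv.1 Hv.2.1,
        Amap_eq n k x hm hd hk2 hk hx1 hx2,
        Amap_eq n k y hm hd hk2 hk hy1 hy2,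
        oplus_eq n k (A' k x) (A' k y) hm hd hk2 hk HAx.1 HAx.2.1 HAy.1 HAy.2.1]
      exact key_hom k x y hk2 hk hx1 hx2 hy1 hy2
  · simp only [gyr, if_neg hM]
    exact ⟨Set.bijOn_id _, fun x _ y _ => rfl⟩

/-- each `gyr(a,b)` is an automorphism of `(G, ⊕)`. -/
theorem stmt7 (n : ℕ) (hn : 3 ≤ n) :
    ∀ a ∈ Gset n, ∀ b ∈ Gset n,
      Set.BijOn (gyr n a b) (Gset n) (Gset n) ∧
        ∀ x ∈ Gset n, ∀ y ∈ Gset n,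
          gyr n a b (oplus n x y) = oplus n (gyr n a b x) (gyr n a b y) := by
  exact stmt7' n hn
end
end

section
/- The left gyroassociative law holds: for all a, b, c ∈ G, a ⊕ (b ⊕ c) = (a ⊕ b) ⊕ gyr(a,b)(c). -/
open scoped Classical

noncomputable section

lemma m_facts (n : ℕ) (hn : 3 ≤ n) :
    ∃ k : ℤ, 0 < k ∧ m n = 4 * k ∧ m n / 2 = 2 * k ∧ (2 : ℤ) ^ n = 8 * k := by
  refine ⟨2 ^ (n - 3), by positivity, ?_, ?_, ?_⟩
  · show (2 : ℤ) ^ (n - 1) = 4 * 2 ^ (n - 3)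
    rw [show n - 1 = (n - 3) + 2 by omega, pow_add]; ring
  · show (2 : ℤ) ^ (n - 1) / 2 = 2 * 2 ^ (n - 3)
    rw [show n - 1 = (n - 3) + 2 by omega, pow_add]
    omega
  · have : (2 : ℤ) ^ n = 2 ^ (n - 3) * 2 ^ 3 := by rw [← pow_add]; congr 1; omega
    rw [this]; ring

lemma emod_congr {M X Y : ℤ} (t : ℤ) (h : Y = X + M * t) : X % M = Y % M := by
  subst h; simp [Int.add_mul_emod_self_left]

lemma oplus_eq_s8 (n : ℕ) (hn : 3 ≤ n) {i j : ℤ} (hi : i ∈ Gset n) (hj : j ∈ Gset n) :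
    oplus n i j = (i + j + (if i ∈ Hset n ∧ Even i ∧ Odd j then m n / 2 else 0)) % m n
      + (if (i ∈ Hset n ↔ j ∈ Hset n) then 0 else m n) := by
  obtain ⟨k, hk, h4, h2, h8⟩ := m_facts n hn
  have h42 : (4 * k) / 2 = 2 * k := by omega
  simp only [oplus, OP, OH, EH, Pset, Hset, Gset, Set.mem_setOf_eq, Int.even_iff,
    Int.odd_iff, h2, h4, h8, h42] at *
  split_ifs <;> first | (exfalso; omega) | simp

lemma emod_shift {M x : ℤ} (h1 : M ≤ x) (h2 : x < 2 * M) : x % M = x - M := by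
  have h : x % M = (x - M) % M := emod_congr (-1) (by ring)
  rw [h, Int.emod_eq_of_lt (by omega) (by omega)]

lemma Amap_eq_s8 (n : ℕ) (hn : 3 ≤ n) {c : ℤ} (hc : c ∈ Gset n) :
    Amap n c = (c + (if Odd c then m n / 2 else 0)) % m n
      + (if c ∈ Hset n then m n else 0) := by
  obtain ⟨k, hk, h4, h2, h8⟩ := m_facts n hn
  have h42 : (4 * k) / 2 = 2 * k := by omega
  simp only [Amap, OP, OH, EH, Pset, Hset, Gset, Set.mem_setOf_eq, Int.even_iff,
    Int.odd_iff, h2, h4, h8, h42] at *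
  split_ifs <;> first
    | (exfalso; omega)
    | (rw [add_zero, add_zero, Int.emod_eq_of_lt (by omega) (by omega)])
    | (rw [add_zero, emod_shift (by omega) (by omega)]; ring)
    | simp

lemma oplus_shape (n : ℕ) (hn : 3 ≤ n) {i j : ℤ} (hi : i ∈ Gset n) (hj : j ∈ Gset n) :
    ∃ T : ℤ, oplus n i j = T + (if (i ∈ Hset n ↔ j ∈ Hset n) then 0 else m n) ∧
      0 ≤ T ∧ T < m n ∧ T % 2 = (i + j) % 2 ∧
      T % m n = (i + j + (if i ∈ Hset n ∧ Even i ∧ Odd j then m n / 2 else 0)) % m n := by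
  obtain ⟨k, hk, h4, h2, h8⟩ := m_facts n hn
  refine ⟨(i + j + (if i ∈ Hset n ∧ Even i ∧ Odd j then m n / 2 else 0)) % m n,
    oplus_eq_s8 n hn hi hj, Int.emod_nonneg _ (by omega), Int.emod_lt_of_pos _ (by omega), ?_, ?_⟩
  · have hp := Int.emod_emod_of_dvd
      (i + j + (if i ∈ Hset n ∧ Even i ∧ Odd j then m n / 2 else 0))
      (⟨2 * k, by omega⟩ : (2 : ℤ) ∣ m n)
    rw [hp]
    split_ifs <;> omega
  · exact Int.emod_emod_of_dvd _ dvd_rfl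

lemma Amap_shape (n : ℕ) (hn : 3 ≤ n) {c : ℤ} (hc : c ∈ Gset n) :
    ∃ T : ℤ, Amap n c = T + (if c ∈ Hset n then m n else 0) ∧
      0 ≤ T ∧ T < m n ∧ T % 2 = c % 2 ∧
      T % m n = (c + (if Odd c then m n / 2 else 0)) % m n := by
  obtain ⟨k, hk, h4, h2, h8⟩ := m_facts n hn
  refine ⟨(c + (if Odd c then m n / 2 else 0)) % m n,
    Amap_eq_s8 n hn hc, Int.emod_nonneg _ (by omega), Int.emod_lt_of_pos _ (by omega), ?_, ?_⟩
  · have hp := Int.emod_emod_of_dvd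
      (c + (if Odd c then m n / 2 else 0))
      (⟨2 * k, by omega⟩ : (2 : ℤ) ∣ m n)
    rw [hp]
    split_ifs <;> omega
  · exact Int.emod_emod_of_dvd _ dvd_rfl

lemma gyr_shape (n : ℕ) (hn : 3 ≤ n) {a b c : ℤ} (hc : c ∈ Gset n) :
    ∃ T : ℤ, gyr n a b c = T + (if c ∈ Hset n then m n else 0) ∧
      0 ≤ T ∧ T < m n ∧ T % 2 = c % 2 ∧
      T % m n = (c + (if (a, b) ∈ Mset n ∧ Odd c then m n / 2 else 0)) % m n := by
  obtain ⟨k, hk, h4, h2, h8⟩ := m_facts n hn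
  unfold gyr
  by_cases hM : (a, b) ∈ Mset n
  · rw [if_pos hM]
    obtain ⟨T, e1, e2, e3, e4, e5⟩ := Amap_shape n hn hc
    have h5 : (if (a, b) ∈ Mset n ∧ Odd c then m n / 2 else 0)
        = (if Odd c then m n / 2 else 0) := by simp [hM]
    exact ⟨T, e1, e2, e3, e4, by rw [h5]; exact e5⟩
  · rw [if_neg hM]
    have hc' : 0 ≤ c ∧ c < 8 * k := by simpa [Gset, Set.mem_setOf_eq, h8] using hc
    have hif : (if (a, b) ∈ Mset n ∧ Odd c then m n / 2 else 0) = 0 := by simp [hM]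
    by_cases hH : c ∈ Hset n
    · have hH' : 4 * k ≤ c ∧ c < 2 * (4 * k) := by simpa [Hset, Set.mem_setOf_eq, h4] using hH
      refine ⟨c - m n, by simp only [id_eq]; rw [if_pos hH]; ring, by omega, by omega, by omega, ?_⟩
      rw [hif, add_zero]
      exact emod_congr 1 (by ring)
    · have hH' : ¬(4 * k ≤ c ∧ c < 2 * (4 * k)) := by simpa [Hset, Set.mem_setOf_eq, h4] using hH
      refine ⟨c, by simp only [id_eq]; rw [if_neg hH]; ring, by omega, by omega, rfl, by rw [hif, add_zero]⟩

lemma emod_add_congr {M X Y X' Y' : ℤ} (hX : X % M = X' % M) (hY : Y % M = Y' % M) :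
    (X + Y) % M = (X' + Y') % M := by
  rw [Int.add_emod, hX, hY, ← Int.add_emod]

lemma exists_shift {M X T : ℤ} (h : T % M = X % M) : ∃ t : ℤ, T = X + M * t := by
  obtain ⟨t, ht⟩ := Int.ModEq.dvd (h : Int.ModEq M T X)
  exact ⟨-t, by linear_combination -ht⟩

lemma Mset_iff (n : ℕ) (hn : 3 ≤ n) {a b : ℤ} (ha : a ∈ Gset n) (hb : b ∈ Gset n) :
    ((a, b) ∈ Mset n) ↔
      ((¬ a ∈ Hset n ∧ a % 2 = 1 ∧ b ∈ Hset n) ∨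
       (a ∈ Hset n ∧ a % 2 = 1 ∧ ¬(b ∈ Hset n ↔ b % 2 = 1)) ∨
       (a ∈ Hset n ∧ a % 2 = 0 ∧ b % 2 = 1)) := by
  obtain ⟨k, hk, h4, h2, h8⟩ := m_facts n hn
  simp only [Mset, OP, OH, EH, Pset, Hset, Gset, Set.mem_setOf_eq, Set.mem_union,
    Set.mem_prod, Int.even_iff, Int.odd_iff, h4, h8] at *
  omega

lemma oplus_shape' (n : ℕ) (hn : 3 ≤ n) (k : ℤ) (hm4 : m n = 4 * k) {i j : ℤ}
    (hi : i ∈ Gset n) (hj : j ∈ Gset n) :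
    ∃ T E D : ℤ, oplus n i j = T + E ∧ 0 ≤ T ∧ T < 4 * k ∧ T % 2 = (i + j) % 2 ∧
      T % (4 * k) = (i + j + D) % (4 * k) ∧
      ((E = 0 ∧ (4 * k ≤ i ↔ 4 * k ≤ j)) ∨ (E = 4 * k ∧ ¬(4 * k ≤ i ↔ 4 * k ≤ j))) ∧
      ((D = 0 ∧ ¬(4 * k ≤ i ∧ i % 2 = 0 ∧ j % 2 = 1)) ∨
       (D = 2 * k ∧ (4 * k ≤ i ∧ i % 2 = 0 ∧ j % 2 = 1))) := by
  obtain ⟨k', hk', h4', h2', h8'⟩ := m_facts n hn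
  have hk0 : 0 < k := by omega
  have h2x : m n / 2 = 2 * k := by omega
  have h8x : (2 : ℤ) ^ n = 8 * k := by omega
  obtain ⟨T, e, b1, b2, par, res⟩ := oplus_shape n hn hi hj
  have hiG : 0 ≤ i ∧ i < 8 * k := by simpa [Gset, Set.mem_setOf_eq, h8x] using hi
  have hjG : 0 ≤ j ∧ j < 8 * k := by simpa [Gset, Set.mem_setOf_eq, h8x] using hj
  refine ⟨T, _, _, e, b1, by omega, par, by rw [← hm4]; exact res, ?_, ?_⟩
  · by_cases h : (i ∈ Hset n ↔ j ∈ Hset n)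
    · refine Or.inl ⟨if_pos h, ?_⟩
      simp only [Hset, Set.mem_setOf_eq, hm4] at h; omega
    · refine Or.inr ⟨by rw [if_neg h, hm4], ?_⟩
      simp only [Hset, Set.mem_setOf_eq, hm4] at h; omega
  · by_cases h : i ∈ Hset n ∧ Even i ∧ Odd j
    · refine Or.inr ⟨by rw [if_pos h, h2x], ?_⟩
      simp only [Hset, Set.mem_setOf_eq, hm4, Int.even_iff, Int.odd_iff] at h; omega
    · refine Or.inl ⟨if_neg h, ?_⟩
      simp only [Hset, Set.mem_setOf_eq, hm4, Int.even_iff, Int.odd_iff] at h; omega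

lemma gyr_shape' (n : ℕ) (hn : 3 ≤ n) (k : ℤ) (hm4 : m n = 4 * k) {a b c : ℤ}
    (ha : a ∈ Gset n) (hb : b ∈ Gset n) (hc : c ∈ Gset n) :
    ∃ T E D : ℤ, gyr n a b c = T + E ∧ 0 ≤ T ∧ T < 4 * k ∧ T % 2 = c % 2 ∧
      T % (4 * k) = (c + D) % (4 * k) ∧
      ((E = 0 ∧ ¬(4 * k ≤ c)) ∨ (E = 4 * k ∧ 4 * k ≤ c)) ∧
      ((D = 0 ∧ ¬(((¬(4 * k ≤ a) ∧ a % 2 = 1 ∧ 4 * k ≤ b) ∨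
          (4 * k ≤ a ∧ a % 2 = 1 ∧ ¬(4 * k ≤ b ↔ b % 2 = 1)) ∨
          (4 * k ≤ a ∧ a % 2 = 0 ∧ b % 2 = 1)) ∧ c % 2 = 1)) ∨
       (D = 2 * k ∧ (((¬(4 * k ≤ a) ∧ a % 2 = 1 ∧ 4 * k ≤ b) ∨
          (4 * k ≤ a ∧ a % 2 = 1 ∧ ¬(4 * k ≤ b ↔ b % 2 = 1)) ∨
          (4 * k ≤ a ∧ a % 2 = 0 ∧ b % 2 = 1)) ∧ c % 2 = 1))) := by
  obtain ⟨k', hk', h4', h2', h8'⟩ := m_facts n hn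
  have hk0 : 0 < k := by omega
  have h2x : m n / 2 = 2 * k := by omega
  have h8x : (2 : ℤ) ^ n = 8 * k := by omega
  obtain ⟨T, e, b1, b2, par, res⟩ := gyr_shape n hn (a := a) (b := b) hc
  have haG : 0 ≤ a ∧ a < 8 * k := by simpa [Gset, Set.mem_setOf_eq, h8x] using ha
  have hbG : 0 ≤ b ∧ b < 8 * k := by simpa [Gset, Set.mem_setOf_eq, h8x] using hb
  have hcG : 0 ≤ c ∧ c < 8 * k := by simpa [Gset, Set.mem_setOf_eq, h8x] using hc
  have hMiff : ((a, b) ∈ Mset n) ↔ ((¬(4 * k ≤ a) ∧ a % 2 = 1 ∧ 4 * k ≤ b) ∨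
      (4 * k ≤ a ∧ a % 2 = 1 ∧ ¬(4 * k ≤ b ↔ b % 2 = 1)) ∨
      (4 * k ≤ a ∧ a % 2 = 0 ∧ b % 2 = 1)) := by
    rw [Mset_iff n hn ha hb]
    simp only [Hset, Set.mem_setOf_eq, hm4]
    omega
  refine ⟨T, _, _, e, b1, by omega, par, by rw [← hm4]; exact res, ?_, ?_⟩
  · by_cases h : c ∈ Hset n
    · refine Or.inr ⟨by rw [if_pos h, hm4], ?_⟩
      simp only [Hset, Set.mem_setOf_eq, hm4] at h; omega
    · refine Or.inl ⟨if_neg h, ?_⟩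
      simp only [Hset, Set.mem_setOf_eq, hm4] at h; omega
  · by_cases h : (a, b) ∈ Mset n ∧ Odd c
    · refine Or.inr ⟨by rw [if_pos h, h2x], ?_⟩
      obtain ⟨h1, h2⟩ := h
      rw [Int.odd_iff] at h2
      exact ⟨hMiff.mp h1, h2⟩
    · refine Or.inl ⟨if_neg h, ?_⟩
      rw [not_and_or] at h
      rcases h with h | h
      · intro hx; exact (h (hMiff.mpr hx.1)).elim
      · rw [Int.odd_iff] at h; omega

set_option maxHeartbeats 4000000 in
/-- the left gyroassociative law. -/
theorem stmt8 (n : ℕ) (hn : 3 ≤ n) :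
    ∀ a ∈ Gset n, ∀ b ∈ Gset n, ∀ c ∈ Gset n,
      oplus n a (oplus n b c) = oplus n (oplus n a b) (gyr n a b c) := by
  intro a ha b hb c hc
  obtain ⟨k, hk, h4, h2, h8⟩ := m_facts n hn
  have ha' : 0 ≤ a ∧ a < 8 * k := by simpa [Gset, Set.mem_setOf_eq, h8] using ha
  have hb' : 0 ≤ b ∧ b < 8 * k := by simpa [Gset, Set.mem_setOf_eq, h8] using hb
  have hc' : 0 ≤ c ∧ c < 8 * k := by simpa [Gset, Set.mem_setOf_eq, h8] using hc
  obtain ⟨T1, E1, D1, e1, p1a, p1b, q1, r1, hE1, hD1⟩ := oplus_shape' n hn k h4 hb hc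
  obtain ⟨T3, E3, D3, e3, p3a, p3b, q3, r3, hE3, hD3⟩ := oplus_shape' n hn k h4 ha hb
  obtain ⟨T5, E5, D5, g1, p5a, p5b, q5, r5, hE5, hD5⟩ := gyr_shape' n hn k h4 ha hb hc
  have hu_mem : oplus n b c ∈ Gset n := by
    rw [e1]; simp only [Gset, Set.mem_setOf_eq, h8]
    clear * - p1a p1b hE1 hk
    omega
  have hv_mem : oplus n a b ∈ Gset n := by
    rw [e3]; simp only [Gset, Set.mem_setOf_eq, h8]
    clear * - p3a p3b hE3 hk
    omega
  have hw_mem : gyr n a b c ∈ Gset n := by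
    rw [g1]; simp only [Gset, Set.mem_setOf_eq, h8]
    clear * - p5a p5b hE5 hk
    omega
  obtain ⟨T2, E2, D2, f1, p2a, p2b, q2, r2, hE2, hD2⟩ := oplus_shape' n hn k h4 ha hu_mem
  obtain ⟨T4, E4, D4, f2, p4a, p4b, q4, r4, hE4, hD4⟩ := oplus_shape' n hn k h4 hv_mem hw_mem
  rw [e1] at q2 r2 hE2 hD2
  rw [e3] at q4 r4 hE4 hD4
  rw [g1] at q4 r4 hE4 hD4
  rw [f1, f2]
  clear f1 f2 e1 e3 g1 hu_mem hv_mem hw_mem ha hb hc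
  have hT24 : T2 = T4 := by
    have hmod : T2 % (4 * k) = T4 % (4 * k) := by
      rw [r2, r4]
      obtain ⟨t1, ht1⟩ := exists_shift r1
      obtain ⟨t3, ht3⟩ := exists_shift r3
      obtain ⟨t5, ht5⟩ := exists_shift r5
      rw [ht1, ht3, ht5]
      clear * - hk ha' hb' hc' p1a p1b p3a p3b p5a p5b q1 q3 q5 hE1 hE3 hE5 hD1 hD2 hD3 hD4 hD5
      have q1' : (T1 + E1) % 2 = (b + c) % 2 := by
        clear * - q1 hE1; rcases hE1 with ⟨rfl, h⟩ | ⟨rfl, h⟩ <;> omega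
      have q3' : (T3 + E3) % 2 = (a + b) % 2 := by
        clear * - q3 hE3; rcases hE3 with ⟨rfl, h⟩ | ⟨rfl, h⟩ <;> omega
      have q5' : (T5 + E5) % 2 = c % 2 := by
        clear * - q5 hE5; rcases hE5 with ⟨rfl, h⟩ | ⟨rfl, h⟩ <;> omega
      have h3H : 4 * k ≤ T3 + E3 ↔ ¬(4 * k ≤ a ↔ 4 * k ≤ b) := by
        clear * - hE3 p3a p3b hk; rcases hE3 with ⟨rfl, h⟩ | ⟨rfl, h⟩ <;> omega
      have e1' : E1 = 0 ∨ E1 = 4 * k := hE1.imp And.left And.left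
      have e3' : E3 = 0 ∨ E3 = 4 * k := hE3.imp And.left And.left
      have e5' : E5 = 0 ∨ E5 = 4 * k := hE5.imp And.left And.left
      have hD2' : (D2 = 0 ∧ ¬(4 * k ≤ a ∧ a % 2 = 0 ∧ (b + c) % 2 = 1)) ∨
          (D2 = 2 * k ∧ (4 * k ≤ a ∧ a % 2 = 0 ∧ (b + c) % 2 = 1)) := by
        clear * - hD2 q1'; omega
      have hD4' : (D4 = 0 ∧ ¬(¬(4 * k ≤ a ↔ 4 * k ≤ b) ∧ (a + b) % 2 = 0 ∧ c % 2 = 1)) ∨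
          (D4 = 2 * k ∧ (¬(4 * k ≤ a ↔ 4 * k ≤ b) ∧ (a + b) % 2 = 0 ∧ c % 2 = 1)) := by
        clear * - hD4 q3' q5' h3H; omega
      clear hD2 hD4 q1 q3 q5 q1' q3' q5' h3H hE1 hE3 hE5 p3a p3b
      have hSD : (D3 + D4 + D5) - (D1 + D2) = -4 * k ∨
          (D3 + D4 + D5) - (D1 + D2) = 0 ∨ (D3 + D4 + D5) - (D1 + D2) = 4 * k := by
        rcases Int.emod_two_eq c with hc2 | hc2
        · have d1 : D1 = 0 := by clear * - hD1 hc2; omega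
          have d4 : D4 = 0 := by clear * - hD4' hc2; omega
          have d5 : D5 = 0 := by clear * - hD5 hc2; omega
          have d23 : D2 = D3 := by clear * - hD2' hD3 hc2; omega
          clear * - d1 d4 d5 d23; omega
        · clear * - hD1 hD2' hD3 hD4' hD5 hc2 hk
          rcases hD1 with ⟨v1, w1⟩ | ⟨v1, w1⟩ <;>
          rcases hD2' with ⟨v2, w2⟩ | ⟨v2, w2⟩ <;>
          rcases hD3 with ⟨v3, w3⟩ | ⟨v3, w3⟩ <;>
          rcases hD4' with ⟨v4, w4⟩ | ⟨v4, w4⟩ <;>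
          rcases hD5 with ⟨v5, w5⟩ | ⟨v5, w5⟩ <;>
          omega
      have hSE : (E3 + E5) - E1 = -4 * k ∨ (E3 + E5) - E1 = 0 ∨
          (E3 + E5) - E1 = 4 * k ∨ (E3 + E5) - E1 = 8 * k := by
        clear * - e1' e3' e5'; omega
      rcases hSD with h1 | h1 | h1 <;> rcases hSE with h2 | h2 | h2 | h2 <;>
      first
        | (refine emod_congr (t3 + t5 - t1 - 2) ?_; linear_combination h1 + h2)
        | (refine emod_congr (t3 + t5 - t1 - 1) ?_; linear_combination h1 + h2)
        | (refine emod_congr (t3 + t5 - t1) ?_; linear_combination h1 + h2)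
        | (refine emod_congr (t3 + t5 - t1 + 1) ?_; linear_combination h1 + h2)
        | (refine emod_congr (t3 + t5 - t1 + 2) ?_; linear_combination h1 + h2)
        | (refine emod_congr (t3 + t5 - t1 + 3) ?_; linear_combination h1 + h2)
    calc T2 = T2 % (4 * k) := (Int.emod_eq_of_lt p2a p2b).symm
      _ = T4 % (4 * k) := hmod
      _ = T4 := Int.emod_eq_of_lt p4a p4b
  clear * - hT24 hE2 hE4 hE1 hE3 hE5 p1a p1b p3a p3b p5a p5b ha' hb' hc' hk
  omega
end
end

section
/- The left loop property holds: for all a, b ∈ G, gyr(a ⊕ b, b) = gyr(a, b) (equality of maps G → G). -/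
set_option linter.all false

open scoped Classical

noncomputable section

lemma mem_Mset_iff (n : ℕ) (x y : ℤ) :
    (x, y) ∈ Mset n ↔ (0 ≤ x ∧ x < 2 * m n ∧ 0 ≤ y ∧ y < 2 * m n ∧
      ¬(x % 2 = 0 ∧ x < m n) ∧ ¬(y % 2 = 0 ∧ y < m n) ∧
      ¬(x % 2 = y % 2 ∧ ((m n ≤ x) ↔ (m n ≤ y)))) := by
  simp only [Mset, OP, EP, OH, EH, Pset, Hset, Set.mem_union, Set.mem_prod,
    Set.mem_setOf_eq, Int.odd_iff, Int.even_iff]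
  omega

set_option maxHeartbeats 1600000 in
lemma key_mem (n : ℕ) (hn : 3 ≤ n) (a b : ℤ) (ha : a ∈ Gset n) (hb : b ∈ Gset n) :
    ((oplus n a b, b) ∈ Mset n ↔ (a, b) ∈ Mset n) := by
  have hk : 0 < m n := by unfold m; positivity
  have hk4 : m n % 4 = 0 := by
    have h2 : 2 ≤ n - 1 := by omega
    obtain ⟨j, hj⟩ := Nat.exists_eq_add_of_le h2
    have : m n = 4 * 2 ^ j := by rw [m, hj, pow_add]; norm_num
    omega
  have h2n : (2 : ℤ) ^ n = 2 * m n := by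
    have h : (2 : ℤ) ^ n = 2 ^ (n - 1) * 2 := by
      rw [← pow_succ]; congr 1; omega
    rw [m, h]; ring
  have hdvd : (2 : ℤ) ∣ m n := by omega
  set t1 := (a + b) % m n with ht1
  set t2 := (a + b + m n / 2) % m n with ht2
  have ht1a : 0 ≤ t1 := Int.emod_nonneg _ (by omega)
  have ht1b : t1 < m n := Int.emod_lt_of_pos _ hk
  have ht1p : t1 % 2 = (a + b) % 2 := Int.emod_emod_of_dvd _ hdvd
  have ht2a : 0 ≤ t2 := Int.emod_nonneg _ (by omega)
  have ht2b : t2 < m n := Int.emod_lt_of_pos _ hk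
  have ht2p : t2 % 2 = (a + b + m n / 2) % 2 := Int.emod_emod_of_dvd _ hdvd
  simp only [Gset, Set.mem_setOf_eq, h2n] at ha hb
  simp only [oplus, OP, EP, OH, EH, Pset, Hset, Set.mem_setOf_eq,
    Int.odd_iff, Int.even_iff] at *
  rw [mem_Mset_iff, mem_Mset_iff]
  split_ifs with h1 h2 h3 <;> omega

/-- the left loop property. -/
theorem stmt9 (n : ℕ) (hn : 3 ≤ n) :
    ∀ a ∈ Gset n, ∀ b ∈ Gset n,
      gyr n (oplus n a b) b = gyr n a b := by
  intro a ha b hb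
  have h := key_mem n hn a b ha hb
  by_cases hm : (a, b) ∈ Mset n
  · rw [gyr, gyr, if_pos hm, if_pos (h.mpr hm)]
  · rw [gyr, gyr, if_neg hm, if_neg (fun hc => hm (h.mp hc))]
end
end

section
/- The structure (G, ⊕) is gyrocommutative: for all a, b ∈ G, a ⊕ b = gyr(a,b)(b ⊕ a). -/
open scoped Classical

noncomputable section

section Aux

variable {n : ℕ} {a b x : ℤ}

lemma aux_oplus_PP (ha0 : 0 ≤ a) (ha1 : a < m n) (hb0 : 0 ≤ b) (hb1 : b < m n) :
    oplus n a b = (a + b) % m n := by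
  simp only [oplus, EH, OH, OP, EP, Pset, Hset, Set.mem_setOf_eq]
  rw [if_neg (by rintro ⟨⟨⟨h, -⟩, -⟩, -⟩; omega),
      if_neg (by rintro ⟨⟨⟨h, -⟩, -⟩, -⟩; omega),
      if_pos (Or.inl ⟨⟨ha0, ha1⟩, hb0, hb1⟩)]

lemma aux_oplus_PH (ha0 : 0 ≤ a) (ha1 : a < m n) (hb0 : m n ≤ b) (hb1 : b < 2 * m n) :
    oplus n a b = (a + b) % m n + m n := by
  simp only [oplus, EH, OH, OP, EP, Pset, Hset, Set.mem_setOf_eq]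
  rw [if_neg (by rintro ⟨⟨⟨h, -⟩, -⟩, -⟩; omega),
      if_neg (by rintro ⟨⟨⟨h, -⟩, -⟩, -⟩; omega),
      if_neg (by rintro (⟨-, -, h⟩ | ⟨⟨h, -⟩, -⟩) <;> omega)]

lemma aux_oplus_HP_eo (ha0 : m n ≤ a) (ha1 : a < 2 * m n) (hae : a % 2 = 0)
    (hb0 : 0 ≤ b) (hb1 : b < m n) (hbo : b % 2 = 1) :
    oplus n a b = (a + b + m n / 2) % m n + m n := by
  simp only [oplus, EH, OH, OP, EP, Pset, Hset, Set.mem_setOf_eq, Int.even_iff, Int.odd_iff]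
  rw [if_neg (by rintro ⟨-, ⟨h, -⟩, -⟩; omega),
      if_pos ⟨⟨⟨ha0, ha1⟩, hae⟩, ⟨hb0, hb1⟩, hbo⟩]

lemma aux_oplus_HP_ne (ha0 : m n ≤ a) (ha1 : a < 2 * m n)
    (hb0 : 0 ≤ b) (hb1 : b < m n) (h : a % 2 = 1 ∨ b % 2 = 0) :
    oplus n a b = (a + b) % m n + m n := by
  simp only [oplus, EH, OH, OP, EP, Pset, Hset, Set.mem_setOf_eq, Int.even_iff, Int.odd_iff]
  rw [if_neg (by rintro ⟨-, ⟨h, -⟩, -⟩; omega),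
      if_neg (by rintro ⟨⟨-, hae⟩, -, hbo⟩; omega),
      if_neg (by rintro (⟨⟨-, h2⟩, -⟩ | ⟨-, h2, -⟩) <;> omega)]

lemma aux_oplus_HH_eo (ha0 : m n ≤ a) (ha1 : a < 2 * m n) (hae : a % 2 = 0)
    (hb0 : m n ≤ b) (hb1 : b < 2 * m n) (hbo : b % 2 = 1) :
    oplus n a b = (a + b + m n / 2) % m n := by
  simp only [oplus, EH, OH, OP, EP, Pset, Hset, Set.mem_setOf_eq, Int.even_iff, Int.odd_iff]
  rw [if_pos ⟨⟨⟨ha0, ha1⟩, hae⟩, ⟨hb0, hb1⟩, hbo⟩]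

lemma aux_oplus_HH_ne (ha0 : m n ≤ a) (ha1 : a < 2 * m n)
    (hb0 : m n ≤ b) (hb1 : b < 2 * m n) (h : a % 2 = 1 ∨ b % 2 = 0) :
    oplus n a b = (a + b) % m n := by
  simp only [oplus, EH, OH, OP, EP, Pset, Hset, Set.mem_setOf_eq, Int.even_iff, Int.odd_iff]
  rw [if_neg (by rintro ⟨⟨-, hae⟩, -, hbo⟩; omega),
      if_neg (by rintro ⟨-, ⟨-, h2⟩, -⟩; omega),
      if_pos (Or.inr ⟨⟨ha0, ha1⟩, hb0, hb1⟩)]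

lemma aux_Amap_OP (h0 : 0 ≤ x) (h1 : x < m n) (h2 : x % 2 = 1) :
    Amap n x = (x + m n / 2) % m n := by
  simp only [Amap, OP, OH, Pset, Hset, Set.mem_setOf_eq, Int.odd_iff]
  rw [if_pos ⟨⟨h0, h1⟩, h2⟩]

lemma aux_Amap_OH (h0 : m n ≤ x) (h1 : x < 2 * m n) (h2 : x % 2 = 1) :
    Amap n x = (x + m n / 2) % m n + m n := by
  simp only [Amap, OP, OH, Pset, Hset, Set.mem_setOf_eq, Int.odd_iff]
  rw [if_neg (by rintro ⟨⟨-, h⟩, -⟩; omega), if_pos ⟨⟨h0, h1⟩, h2⟩]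

lemma aux_Amap_id (h : x % 2 = 0) : Amap n x = x := by
  simp only [Amap, OP, OH, Pset, Hset, Set.mem_setOf_eq, Int.odd_iff]
  rw [if_neg (by rintro ⟨-, h2⟩; omega), if_neg (by rintro ⟨-, h2⟩; omega)]

lemma aux_Mset_iff :
    (a, b) ∈ Mset n ↔
      (((0 ≤ a ∧ a < m n) ∧ a % 2 = 1) ∧
        ((((m n ≤ b ∧ b < 2 * m n) ∧ b % 2 = 1) ∨ ((m n ≤ b ∧ b < 2 * m n) ∧ b % 2 = 0)))) ∨
      (((m n ≤ a ∧ a < 2 * m n) ∧ a % 2 = 1) ∧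
        ((((0 ≤ b ∧ b < m n) ∧ b % 2 = 1) ∨ ((m n ≤ b ∧ b < 2 * m n) ∧ b % 2 = 0)))) ∨
      (((m n ≤ a ∧ a < 2 * m n) ∧ a % 2 = 0) ∧
        ((((0 ≤ b ∧ b < m n) ∧ b % 2 = 1) ∨ ((m n ≤ b ∧ b < 2 * m n) ∧ b % 2 = 1)))) := by
  simp only [Mset, Set.mem_union, Set.mem_prod, OP, OH, EH, Pset, Hset, Set.mem_setOf_eq,
    Int.odd_iff, Int.even_iff, or_assoc]

lemma aux_gyr_mem (h : (a, b) ∈ Mset n) : gyr n a b x = Amap n x := by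
  simp only [gyr]; rw [if_pos h]

lemma aux_gyr_not (h : (a, b) ∉ Mset n) : gyr n a b x = x := by
  simp only [gyr]; rw [if_neg h]; rfl

end Aux

/-- gyrocommutativity. -/
theorem stmt10 (n : ℕ) (hn : 3 ≤ n) :
    ∀ a ∈ Gset n, ∀ b ∈ Gset n,
      oplus n a b = gyr n a b (oplus n b a) := by
  intro a ha b hb
  obtain ⟨ha0, ha2⟩ := ha
  obtain ⟨hb0, hb2⟩ := hb
  have h2n : (2 : ℤ) ^ n = 2 * m n := by
    rw [m]
    conv_lhs => rw [show n = (n - 1) + 1 from by omega]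
    rw [pow_succ]; ring
  have hex : ∃ c : ℤ, m n / 2 = c ∧ m n = c + c ∧ c % 2 = 0 ∧ 0 < c := by
    refine ⟨2 ^ (n - 2), ?_, ?_, ?_, by positivity⟩
    · rw [m]
      conv_lhs => rw [show n - 1 = (n - 2) + 1 from by omega]
      rw [pow_succ]; omega
    · rw [m]
      conv_lhs => rw [show n - 1 = (n - 2) + 1 from by omega]
      rw [pow_succ]; ring
    · rw [show n - 2 = (n - 3) + 1 from by omega, pow_succ, Int.mul_emod_left]
  obtain ⟨c, hhalf, hM, hcE, hcpos⟩ := hex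
  rw [h2n] at ha2 hb2
  have hMne : m n ≠ 0 := by omega
  have hMpos : 0 < m n := by omega
  have hmod0 : ∀ x : ℤ, 0 ≤ x % m n := fun x => Int.emod_nonneg x hMne
  have hmod1 : ∀ x : ℤ, x % m n < m n := fun x => Int.emod_lt_of_pos x hMpos
  have hpar : ∀ x : ℤ, x % m n % 2 = x % 2 := fun x =>
    Int.emod_emod_of_dvd x ⟨c, by omega⟩
  have hsh : ∀ x y : ℤ, (x % m n + y) % m n = (x + y) % m n := fun x y =>
    Int.emod_add_emod x (m n) y
  rcases Int.even_or_odd a with haE | haO <;>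
    [rw [Int.even_iff] at haE; rw [Int.odd_iff] at haO] <;>
    rcases Int.even_or_odd b with hbE | hbO <;>
    [skip; skip; skip; skip] <;>
    first
      | rw [Int.even_iff] at hbE
      | rw [Int.odd_iff] at hbO
  all_goals rcases lt_or_ge a (m n) with haP | haH <;> rcases lt_or_ge b (m n) with hbP | hbH
  -- a even, b even
  · -- EP, EP
    rw [aux_oplus_PP ha0 haP hb0 hbP, aux_oplus_PP hb0 hbP ha0 haP,
      aux_gyr_not (by rw [aux_Mset_iff]; omega), add_comm b a]
  · -- EP, EH
    rw [aux_oplus_PH ha0 haP hbH hb2, aux_oplus_HP_ne hbH hb2 ha0 haP (Or.inr haE),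
      aux_gyr_not (by rw [aux_Mset_iff]; omega), add_comm b a]
  · -- EH, EP
    rw [aux_oplus_HP_ne haH ha2 hb0 hbP (Or.inr hbE), aux_oplus_PH hb0 hbP haH ha2,
      aux_gyr_not (by rw [aux_Mset_iff]; omega), add_comm b a]
  · -- EH, EH
    rw [aux_oplus_HH_ne haH ha2 hbH hb2 (Or.inr hbE),
      aux_oplus_HH_ne hbH hb2 haH ha2 (Or.inr haE),
      aux_gyr_not (by rw [aux_Mset_iff]; omega), add_comm b a]
  -- a even, b odd
  · -- EP, OP
    rw [aux_oplus_PP ha0 haP hb0 hbP, aux_oplus_PP hb0 hbP ha0 haP,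
      aux_gyr_not (by rw [aux_Mset_iff]; omega), add_comm b a]
  · -- EP, OH
    rw [aux_oplus_PH ha0 haP hbH hb2, aux_oplus_HP_ne hbH hb2 ha0 haP (Or.inl hbO),
      aux_gyr_not (by rw [aux_Mset_iff]; omega), add_comm b a]
  · -- EH, OP  (case 10)
    rw [aux_oplus_HP_eo haH ha2 haE hb0 hbP hbO, aux_oplus_PH hb0 hbP haH ha2,
      aux_gyr_mem (by rw [aux_Mset_iff]; omega),
      aux_Amap_OH (by have := hmod0 (b + a); omega) (by have := hmod1 (b + a); omega)
        (by have := hpar (b + a); omega),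
      show (b + a) % m n + m n + m n / 2 = (b + a) % m n + (m n + m n / 2) from by ring,
      hsh, show b + a + (m n + m n / 2) = (a + b + m n / 2) + m n * 1 from by ring,
      Int.add_mul_emod_self_left]
  · -- EH, OH  (case 12)
    rw [aux_oplus_HH_eo haH ha2 haE hbH hb2 hbO,
      aux_oplus_HH_ne hbH hb2 haH ha2 (Or.inl hbO),
      aux_gyr_mem (by rw [aux_Mset_iff]; omega),
      aux_Amap_OP (hmod0 (b + a)) (hmod1 (b + a)) (by have := hpar (b + a); omega),
      hsh, add_comm b a]
  -- a odd, b even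
  · -- OP, EP
    rw [aux_oplus_PP ha0 haP hb0 hbP, aux_oplus_PP hb0 hbP ha0 haP,
      aux_gyr_not (by rw [aux_Mset_iff]; omega), add_comm b a]
  · -- OP, EH  (case 7)
    rw [aux_oplus_PH ha0 haP hbH hb2, aux_oplus_HP_eo hbH hb2 hbE ha0 haP haO,
      aux_gyr_mem (by rw [aux_Mset_iff]; omega),
      aux_Amap_OH (by have := hmod0 (b + a + m n / 2); omega)
        (by have := hmod1 (b + a + m n / 2); omega)
        (by have := hpar (b + a + m n / 2); omega),
      show (b + a + m n / 2) % m n + m n + m n / 2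
          = (b + a + m n / 2) % m n + (m n + m n / 2) from by ring,
      hsh, show b + a + m n / 2 + (m n + m n / 2) = (a + b) + m n * 2 from by omega,
      Int.add_mul_emod_self_left]
  · -- OH, EP
    rw [aux_oplus_HP_ne haH ha2 hb0 hbP (Or.inl haO), aux_oplus_PH hb0 hbP haH ha2,
      aux_gyr_not (by rw [aux_Mset_iff]; omega), add_comm b a]
  · -- OH, EH  (case 15)
    rw [aux_oplus_HH_ne haH ha2 hbH hb2 (Or.inr hbE),
      aux_oplus_HH_eo hbH hb2 hbE haH ha2 haO,
      aux_gyr_mem (by rw [aux_Mset_iff]; omega),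
      aux_Amap_OP (hmod0 (b + a + m n / 2)) (hmod1 (b + a + m n / 2))
        (by have := hpar (b + a + m n / 2); omega),
      hsh, show b + a + m n / 2 + m n / 2 = (a + b) + m n * 1 from by omega,
      Int.add_mul_emod_self_left]
  -- a odd, b odd
  · -- OP, OP
    rw [aux_oplus_PP ha0 haP hb0 hbP, aux_oplus_PP hb0 hbP ha0 haP,
      aux_gyr_not (by rw [aux_Mset_iff]; omega), add_comm b a]
  · -- OP, OH  (case 8)
    rw [aux_oplus_PH ha0 haP hbH hb2, aux_oplus_HP_ne hbH hb2 ha0 haP (Or.inl hbO),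
      aux_gyr_mem (by rw [aux_Mset_iff]; omega),
      aux_Amap_id (by have := hpar (b + a); omega), add_comm b a]
  · -- OH, OP  (case 14)
    rw [aux_oplus_HP_ne haH ha2 hb0 hbP (Or.inl haO), aux_oplus_PH hb0 hbP haH ha2,
      aux_gyr_mem (by rw [aux_Mset_iff]; omega),
      aux_Amap_id (by have := hpar (b + a); omega), add_comm b a]
  · -- OH, OH
    rw [aux_oplus_HH_ne haH ha2 hbH hb2 (Or.inl haO),
      aux_oplus_HH_ne hbH hb2 haH ha2 (Or.inl hbO),
      aux_gyr_not (by rw [aux_Mset_iff]; omega), add_comm b a]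
end
end

section
/- Let T = E_H × (O_P ∪ O_H). For all a, b ∈ G: if (a,b) ∉ T ∪ T⁻¹ (where T⁻¹ = {(b,a) : (a,b) ∈ T}), then a ⊕ b = b ⊕ a; and if (a,b) ∈ T ∪ T⁻¹, then a ⊕ b ≡ (b ⊕ a) + m/2 (mod m). -/
open scoped Classical

noncomputable section

lemma modeq_gen (M x y c d : ℤ) (h : M ∣ (y + d) - (x + c)) :
    Int.ModEq M (x % M + c) (y % M + d) := by
  have h1 : Int.ModEq M (x % M + c) (x + c) :=
    (show Int.ModEq M (x % M) x from Int.emod_emod_of_dvd x dvd_rfl).add_right c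
  have h2 : Int.ModEq M (y % M + d) (y + d) :=
    (show Int.ModEq M (y % M) y from Int.emod_emod_of_dvd y dvd_rfl).add_right d
  exact h1.trans ((Int.modEq_iff_dvd.mpr h).trans h2.symm)

/-- with `T = E_H × (O_P ∪ O_H)`, the operation `⊕` is commutative off
`T ∪ T⁻¹`, and `a ⊕ b ≡ (b ⊕ a) + m/2 (mod m)` on `T ∪ T⁻¹`. -/
theorem stmt14 (n : ℕ) (hn : 3 ≤ n) :
    ∀ a ∈ Gset n, ∀ b ∈ Gset n,
      ((a, b) ∉ (EH n ×ˢ (OP n ∪ OH n)) ∪ {p : ℤ × ℤ | (p.2, p.1) ∈ EH n ×ˢ (OP n ∪ OH n)} →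
        oplus n a b = oplus n b a) ∧
      ((a, b) ∈ (EH n ×ˢ (OP n ∪ OH n)) ∪ {p : ℤ × ℤ | (p.2, p.1) ∈ EH n ×ˢ (OP n ∪ OH n)} →
        Int.ModEq (m n) (oplus n a b) (oplus n b a + m n / 2)) := by
  have hd : ∀ x : ℤ, x ∈ Pset n → x ∈ Hset n → False := by
    intro x hx hy
    simp only [Pset, Hset, Set.mem_setOf_eq] at hx hy
    linarith [hx.2, hy.1]
  obtain ⟨K, hK, hM⟩ : ∃ K : ℤ, m n / 2 = K ∧ m n = 2 * K := by
    refine ⟨2 ^ (n - 2), ?_, ?_⟩ <;>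
    · have h2 : m n = 2 * 2 ^ (n - 2) := by
        unfold m; rw [← pow_succ']; congr 1; omega
      omega
  intro a _ b _
  constructor
  · intro hnot
    simp only [Set.mem_union, Set.mem_prod, Set.mem_setOf_eq, not_or, not_and] at hnot
    obtain ⟨h1, h2⟩ := hnot
    unfold oplus
    rw [if_neg (show ¬(a ∈ EH n ∧ b ∈ OH n) from fun h => (h1 h.1).2 h.2),
        if_neg (show ¬(a ∈ EH n ∧ b ∈ OP n) from fun h => (h1 h.1).1 h.2),
        if_neg (show ¬(b ∈ EH n ∧ a ∈ OH n) from fun h => (h2 h.1).2 h.2),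
        if_neg (show ¬(b ∈ EH n ∧ a ∈ OP n) from fun h => (h2 h.1).1 h.2)]
    by_cases h3 : (a ∈ Pset n ∧ b ∈ Pset n) ∨ (a ∈ Hset n ∧ b ∈ Hset n)
    · rw [if_pos h3, if_pos (by tauto), add_comm a b]
    · rw [if_neg h3, if_neg (by tauto), add_comm a b]
  · intro hmem
    simp only [Set.mem_union, Set.mem_prod, Set.mem_setOf_eq] at hmem
    unfold oplus
    rw [hK]
    rcases hmem with ⟨haE, hb⟩ | ⟨hbE, ha⟩
    · have hbOdd : Odd b := by rcases hb with h | h <;> exact h.2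
      have hbnE : b ∉ EH n := fun h => (Int.not_odd_iff_even.mpr h.2) hbOdd
      rcases hb with hbP | hbH
      · -- a ∈ EH, b ∈ OP
        rw [if_neg (show ¬(a ∈ EH n ∧ b ∈ OH n) from fun h => hd b hbP.1 h.2.1),
            if_pos ⟨haE, hbP⟩,
            if_neg (show ¬(b ∈ EH n ∧ a ∈ OH n) from fun h => hbnE h.1),
            if_neg (show ¬(b ∈ EH n ∧ a ∈ OP n) from fun h => hbnE h.1),
            if_neg (show ¬((b ∈ Pset n ∧ a ∈ Pset n) ∨ (b ∈ Hset n ∧ a ∈ Hset n)) from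
              fun h => h.elim (fun h' => hd a h'.2 haE.1) (fun h' => hd b hbP.1 h'.1))]
        have he : (b + a) % m n + m n + K = (b + a) % m n + (m n + K) := by ring
        rw [he]
        exact modeq_gen (m n) (a + b + K) (b + a) (m n) (m n + K) ⟨0, by ring⟩
      · -- a ∈ EH, b ∈ OH
        rw [if_pos ⟨haE, hbH⟩,
            if_neg (show ¬(b ∈ EH n ∧ a ∈ OH n) from fun h => hbnE h.1),
            if_neg (show ¬(b ∈ EH n ∧ a ∈ OP n) from fun h => hbnE h.1),
            if_pos (Or.inr ⟨hbH.1, haE.1⟩)]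
        simpa using modeq_gen (m n) (a + b + K) (b + a) 0 K ⟨0, by ring⟩
    · have haOdd : Odd a := by rcases ha with h | h <;> exact h.2
      have hanE : a ∉ EH n := fun h => (Int.not_odd_iff_even.mpr h.2) haOdd
      rcases ha with haP | haH
      · -- b ∈ EH, a ∈ OP
        rw [if_neg (show ¬(a ∈ EH n ∧ b ∈ OH n) from fun h => hanE h.1),
            if_neg (show ¬(a ∈ EH n ∧ b ∈ OP n) from fun h => hanE h.1),
            if_neg (show ¬((a ∈ Pset n ∧ b ∈ Pset n) ∨ (a ∈ Hset n ∧ b ∈ Hset n)) from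
              fun h => h.elim (fun h' => hd b h'.2 hbE.1) (fun h' => hd a haP.1 h'.1)),
            if_neg (show ¬(b ∈ EH n ∧ a ∈ OH n) from fun h => hd a haP.1 h.2.1),
            if_pos ⟨hbE, haP⟩]
        have he : (b + a + K) % m n + m n + K = (b + a + K) % m n + (m n + K) := by ring
        rw [he]
        exact modeq_gen (m n) (a + b) (b + a + K) (m n) (m n + K) ⟨1, by omega⟩
      · -- b ∈ EH, a ∈ OH
        rw [if_neg (show ¬(a ∈ EH n ∧ b ∈ OH n) from fun h => hanE h.1),
            if_neg (show ¬(a ∈ EH n ∧ b ∈ OP n) from fun h => hanE h.1),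
            if_pos (Or.inr ⟨haH.1, hbE.1⟩), if_pos ⟨hbE, haH⟩]
        simpa using modeq_gen (m n) (a + b) (b + a + K) 0 K ⟨1, by omega⟩
end
end

section
/- A subset K ⊆ G is a subgyrogroup of (G, ⊕) if and only if K has one of the following forms: (1) K = {(k·2^s) mod m : k ∈ ℤ} ⊆ P for some 0 ≤ s ≤ n−1; (2) K = {(k·2^s) mod m : k ∈ ℤ} ∪ {m + ((k·2^s) mod m) : k ∈ ℤ} for some 0 ≤ s ≤ n−1; (3) K = {(k·2^(s+1)) mod m : k ∈ ℤ} ∪ {m + ((2^s + k·2^(s+1)) mod m) : k ∈ ℤ} for some 0 ≤ s ≤ n−2. -/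
open scoped Classical

noncomputable section

/-- `K` is a subgyrogroup of `(G, ⊕)`: contains `0`, closed under `⊕`, contains left
inverses, and is closed under the gyroautomorphisms it generates. -/
def IsSubgyrogroup (n : ℕ) (K : Set ℤ) : Prop :=
  0 ∈ K ∧ (∀ a ∈ K, ∀ b ∈ K, oplus n a b ∈ K) ∧
    (∀ a ∈ K, ∃ b ∈ K, oplus n b a = 0) ∧
    (∀ a ∈ K, ∀ b ∈ K, ∀ c ∈ K, gyr n a b c ∈ K)


namespace Stmt16Aux

variable {n : ℕ}

lemma m_pos (hn : 3 ≤ n) : 0 < m n := by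
  show (0:ℤ) < 2 ^ (n-1); positivity

lemma m_even (hn : 3 ≤ n) : (2:ℤ) ∣ m n := by
  show (2:ℤ) ∣ 2 ^ (n-1)
  exact dvd_pow_self 2 (by omega)

lemma two_pow_n (hn : 3 ≤ n) : (2:ℤ) ^ n = 2 * m n := by
  show (2:ℤ)^n = 2 * 2^(n-1)
  rw [← pow_succ']
  congr 1
  omega

lemma pow_dvd_m (hn : 3 ≤ n) {s : ℕ} (hs : s ≤ n - 1) : (2:ℤ)^s ∣ m n :=
  pow_dvd_pow 2 hs

lemma dvd_emod {d x : ℤ} (hdm : d ∣ m n) (hx : d ∣ x) : d ∣ x % m n := by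
  rw [Int.emod_def]
  exact dvd_sub hx (hdm.mul_right _)

lemma dvd_emod_sub {d x : ℤ} (hdm : d ∣ m n) : d ∣ x % m n - x := by
  have : x - x % m n = m n * (x / m n) := by rw [Int.emod_def]; ring
  have h2 : d ∣ x - x % m n := this ▸ hdm.mul_right _
  rw [show x % m n - x = -(x - x % m n) by ring]
  exact dvd_neg.2 h2

lemma emod_range (hn : 3 ≤ n) (x : ℤ) : 0 ≤ x % m n ∧ x % m n < m n :=
  ⟨Int.emod_nonneg x (m_pos hn).ne', Int.emod_lt_of_pos x (m_pos hn)⟩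

lemma not_PH (hn : 3 ≤ n) {x : ℤ} (h : x ∈ Pset n) : x ∉ Hset n := by
  intro h2; exact absurd h2.1 (not_le.2 h.2)

lemma eq_of_modeq (hn : 3 ≤ n) {a b : ℤ} (ha : 0 ≤ a) (ha' : a < m n) (hb : 0 ≤ b)
    (hb' : b < m n) (h : m n ∣ a - b) : a = b := by
  have := Int.eq_zero_of_abs_lt_dvd h (by rw [abs_lt]; omega)
  omega

/-- characterization of the P-type sets in the statement -/
lemma charP (hn : 3 ≤ n) {s : ℕ} (hs : s ≤ n - 1) :
    {x : ℤ | ∃ k : ℤ, x = (k * 2 ^ s) % m n} = {x : ℤ | (0 ≤ x ∧ x < m n) ∧ (2:ℤ)^s ∣ x} := by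
  ext x
  simp only [Set.mem_setOf_eq]
  constructor
  · rintro ⟨k, rfl⟩
    exact ⟨⟨(emod_range hn _).1, (emod_range hn _).2⟩, dvd_emod (pow_dvd_m hn hs) ⟨k, mul_comm _ _⟩⟩
  · rintro ⟨⟨h1, h2⟩, k, hk⟩
    refine ⟨k, ?_⟩
    rw [mul_comm, ← hk, Int.emod_eq_of_lt h1 h2]

/-- characterization of the H-type sets in the statement -/
lemma charH (hn : 3 ≤ n) {d c : ℤ} (hd : d ∣ m n) :
    {x : ℤ | ∃ k : ℤ, x = m n + (c + k * d) % m n} =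
      {x : ℤ | (m n ≤ x ∧ x < 2 * m n) ∧ d ∣ x - m n - c} := by
  ext x
  simp only [Set.mem_setOf_eq]
  constructor
  · rintro ⟨k, rfl⟩
    refine ⟨⟨by have := (emod_range hn (c + k*d)).1; omega,
      by have := (emod_range hn (c + k*d)).2; omega⟩, ?_⟩
    have h1 : d ∣ (c + k * d) % m n - (c + k * d) := dvd_emod_sub hd
    have : m n + (c + k * d) % m n - m n - c = ((c + k*d) % m n - (c + k*d)) + k * d := by ring
    rw [this]
    exact dvd_add h1 ⟨k, mul_comm _ _⟩
  · rintro ⟨⟨h1, h2⟩, k, hk⟩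
    refine ⟨k, ?_⟩
    have hx : c + k * d = x - m n := by rw [mul_comm]; omega
    rw [hx, Int.emod_eq_of_lt (by omega) (by omega)]
    ring

variable {i j : ℤ}

lemma oplus_PP (hn : 3 ≤ n) (hi : i ∈ Pset n) (hj : j ∈ Pset n) :
    oplus n i j = (i + j) % m n := by
  rw [oplus, if_neg (fun h => not_PH hn hi h.1.1), if_neg (fun h => not_PH hn hi h.1.1),
    if_pos (Or.inl ⟨hi, hj⟩)]

lemma oplus_PH (hn : 3 ≤ n) (hi : i ∈ Pset n) (hj : j ∈ Hset n) :
    oplus n i j = (i + j) % m n + m n := by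
  rw [oplus, if_neg (fun h => not_PH hn hi h.1.1), if_neg (fun h => not_PH hn hi h.1.1),
    if_neg]
  rintro (⟨-, hj'⟩ | ⟨hi', -⟩)
  · exact not_PH hn hj' hj
  · exact not_PH hn hi hi'

lemma oplus_HP (hn : 3 ≤ n) (hi : i ∈ Hset n) (hj : j ∈ Pset n)
    (hne : ¬(i ∈ EH n ∧ j ∈ OP n)) : oplus n i j = (i + j) % m n + m n := by
  rw [oplus, if_neg (fun h => not_PH hn hj h.2.1), if_neg hne, if_neg]
  rintro (⟨hi', -⟩ | ⟨-, hj'⟩)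
  · exact not_PH hn hi' hi
  · exact not_PH hn hj hj'

lemma oplus_HP_tw (hn : 3 ≤ n) (hi : i ∈ EH n) (hj : j ∈ OP n) :
    oplus n i j = (i + j + m n / 2) % m n + m n := by
  rw [oplus, if_neg (fun h => not_PH hn hj.1 h.2.1), if_pos ⟨hi, hj⟩]

lemma oplus_HH (hn : 3 ≤ n) (hi : i ∈ Hset n) (hj : j ∈ Hset n)
    (hne : ¬(i ∈ EH n ∧ j ∈ OH n)) : oplus n i j = (i + j) % m n := by
  rw [oplus, if_neg hne, if_neg (fun h => not_PH hn h.2.1 hj), if_pos (Or.inr ⟨hi, hj⟩)]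

lemma oplus_HH_tw (hi : i ∈ EH n) (hj : j ∈ OH n) :
    oplus n i j = (i + j + m n / 2) % m n := by
  rw [oplus, if_pos ⟨hi, hj⟩]

lemma mem_Mset {a b : ℤ} : (a, b) ∈ Mset n ↔
    (a ∈ OP n ∧ (b ∈ OH n ∨ b ∈ EH n)) ∨ (a ∈ OH n ∧ (b ∈ OP n ∨ b ∈ EH n)) ∨
      (a ∈ EH n ∧ (b ∈ OP n ∨ b ∈ OH n)) := by
  simp [Mset, Set.mem_union, Set.mem_prod, or_assoc]
  tauto

lemma gyr_eq_id {a b : ℤ} (h : (a, b) ∉ Mset n) (c : ℤ) : gyr n a b c = c := by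
  rw [gyr, if_neg h]; rfl

lemma gyr_cases (a b c : ℤ) : gyr n a b c = Amap n c ∨ gyr n a b c = c := by
  rw [gyr]; split
  · exact Or.inl rfl
  · exact Or.inr rfl

lemma neg_emod_add (hn : 3 ≤ n) (a : ℤ) : ((-a) % m n + a) % m n = 0 := by
  rw [Int.emod_add_emod, neg_add_cancel, Int.zero_emod]

lemma notM_PP (hn : 3 ≤ n) {a b : ℤ} (ha : a ∈ Pset n) (hb : b ∈ Pset n) :
    (a, b) ∉ Mset n := by
  rw [mem_Mset]
  rintro (⟨-, hb' | hb'⟩ | ⟨ha', -⟩ | ⟨ha', -⟩)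
  · exact not_PH hn hb hb'.1
  · exact not_PH hn hb hb'.1
  · exact not_PH hn ha ha'.1
  · exact not_PH hn ha ha'.1

/-- Case (1): a subgroup of `P` is a subgyrogroup. -/
lemma isSubP (hn : 3 ≤ n) {s : ℕ} (hs : s ≤ n - 1) :
    IsSubgyrogroup n {x : ℤ | (0 ≤ x ∧ x < m n) ∧ (2:ℤ)^s ∣ x} := by
  have hm := m_pos hn
  refine ⟨⟨⟨le_refl 0, hm⟩, dvd_zero _⟩, ?_, ?_, ?_⟩
  · rintro a ⟨haP, had⟩ b ⟨hbP, hbd⟩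
    rw [oplus_PP hn haP hbP]
    exact ⟨emod_range hn _, dvd_emod (pow_dvd_m hn hs) (dvd_add had hbd)⟩
  · rintro a ⟨haP, had⟩
    refine ⟨(-a) % m n, ⟨emod_range hn _, dvd_emod (pow_dvd_m hn hs) (dvd_neg.2 had)⟩, ?_⟩
    rw [oplus_PP hn (emod_range hn _) haP, neg_emod_add hn]
  · rintro a ⟨haP, -⟩ b ⟨hbP, -⟩ c hc
    rw [gyr_eq_id (notM_PP hn haP hbP) c]
    exact hc

/-- Cases (2) and (3): the union form is a subgyrogroup. -/
lemma isSubU (hn : 3 ≤ n) {σ : ℕ} (hσ : σ ≤ n - 1) (c : ℤ) (hdc : (2:ℤ)^σ ∣ 2 * c) :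
    IsSubgyrogroup n ({x : ℤ | (0 ≤ x ∧ x < m n) ∧ (2:ℤ)^σ ∣ x} ∪
      {x : ℤ | (m n ≤ x ∧ x < 2 * m n) ∧ (2:ℤ)^σ ∣ x - m n - c}) := by
  have hm := m_pos hn
  have hdm : (2:ℤ)^σ ∣ m n := pow_dvd_m hn hσ
  refine ⟨Or.inl ⟨⟨le_refl 0, hm⟩, dvd_zero _⟩, ?_, ?_, ?_⟩
  · -- closure
    rintro a (⟨haP, had⟩ | ⟨haH, had⟩) b (⟨hbP, hbd⟩ | ⟨hbH, hbd⟩)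
    · rw [oplus_PP hn haP hbP]
      exact Or.inl ⟨emod_range hn _, dvd_emod hdm (dvd_add had hbd)⟩
    · rw [oplus_PH hn haP hbH]
      refine Or.inr ⟨⟨by have := (emod_range hn (a+b)).1; omega,
          by have := (emod_range hn (a+b)).2; omega⟩, ?_⟩
      have h1 := dvd_emod_sub (x := a + b) hdm
      have h2 : (2:ℤ)^σ ∣ a + (b - m n - c) + m n := dvd_add (dvd_add had hbd) hdm
      have he : (a + b) % m n + m n - m n - c
          = ((a+b) % m n - (a+b)) + (a + (b - m n - c) + m n) := by ring
      rw [he]; exact dvd_add h1 h2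
    · -- a ∈ H, b ∈ P
      by_cases htw : a ∈ EH n ∧ b ∈ OP n
      · have hσ0 : σ = 0 := by
          by_contra h
          have h2 : (2:ℤ) ∣ b := dvd_trans (dvd_pow_self 2 h) hbd
          have h3 := Int.odd_iff.mp htw.2.2
          omega
        rw [oplus_HP_tw hn htw.1 htw.2]
        refine Or.inr ⟨⟨by have := (emod_range hn (a + b + m n / 2)).1; omega,
          by have := (emod_range hn (a + b + m n / 2)).2; omega⟩, by simp [hσ0]⟩
      · rw [oplus_HP hn haH hbP htw]
        refine Or.inr ⟨⟨by have := (emod_range hn (a+b)).1; omega,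
            by have := (emod_range hn (a+b)).2; omega⟩, ?_⟩
        have h1 := dvd_emod_sub (x := a + b) hdm
        have h2 : (2:ℤ)^σ ∣ (a - m n - c) + b + m n := dvd_add (dvd_add had hbd) hdm
        have he : (a + b) % m n + m n - m n - c
            = ((a+b) % m n - (a+b)) + ((a - m n - c) + b + m n) := by ring
        rw [he]; exact dvd_add h1 h2
    · -- a, b ∈ H
      by_cases htw : a ∈ EH n ∧ b ∈ OH n
      · have hσ0 : σ = 0 := by
          by_contra h
          have h2 : (2:ℤ) ∣ 2^σ := dvd_pow_self 2 h
          have h3 : (2:ℤ)^σ ∣ a - b := by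
            have he : a - b = (a - m n - c) - (b - m n - c) := by ring
            rw [he]; exact dvd_sub had hbd
          have h4 : (2:ℤ) ∣ a - b := h2.trans h3
          have h5 := Int.even_iff.mp htw.1.2
          have h6 := Int.odd_iff.mp htw.2.2
          omega
        rw [oplus_HH_tw htw.1 htw.2]
        exact Or.inl ⟨emod_range hn _, by simp [hσ0]⟩
      · rw [oplus_HH hn haH hbH htw]
        refine Or.inl ⟨emod_range hn _, dvd_emod hdm ?_⟩
        have he : a + b = (a - m n - c) + (b - m n - c) + 2 * m n + 2 * c := by ring
        rw [he]
        exact dvd_add (dvd_add (dvd_add had hbd) (hdm.mul_left 2)) hdc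
  · -- inverses
    rintro a (⟨haP, had⟩ | ⟨haH, had⟩)
    · exact ⟨(-a) % m n, Or.inl ⟨emod_range hn _, dvd_emod hdm (dvd_neg.2 had)⟩,
        by rw [oplus_PP hn (emod_range hn _) haP, neg_emod_add hn]⟩
    · refine ⟨m n + (-a) % m n, Or.inr ⟨⟨by have := (emod_range hn (-a)).1; omega,
          by have := (emod_range hn (-a)).2; omega⟩, ?_⟩, ?_⟩
      · have h1 := dvd_emod_sub (x := -a) hdm
        have h2 : (2:ℤ)^σ ∣ -(a - m n - c) - m n - 2*c :=
          dvd_sub (dvd_sub (dvd_neg.2 had) hdm) hdc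
        have he : m n + (-a) % m n - m n - c
            = ((-a) % m n - (-a)) + (-(a - m n - c) - m n - 2*c) := by ring
        rw [he]; exact dvd_add h1 h2
      · have hbH : m n + (-a) % m n ∈ Hset n :=
          ⟨by have := (emod_range hn (-a)).1; omega, by have := (emod_range hn (-a)).2; omega⟩
        have hnotw : ¬(m n + (-a) % m n ∈ EH n ∧ a ∈ OH n) := by
          rintro ⟨⟨-, hbe⟩, -, hao⟩
          have h1 := dvd_emod_sub (x := -a) (m_even hn)
          have h2 := Int.even_iff.mp hbe
          have h3 := Int.odd_iff.mp hao
          have h4 := m_even hn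
          omega
        rw [oplus_HH hn hbH haH hnotw,
          show m n + (-a) % m n + a = ((-a) % m n + a) + m n * 1 by ring,
          Int.add_mul_emod_self_left]
        exact neg_emod_add hn a
  · -- gyration closure
    intro a ha b hb z hz
    by_cases hσ0 : σ = 0
    · subst hσ0
      rcases gyr_cases a b z with h | h <;> rw [h]
      · rw [Amap]
        split_ifs with h1 h2
        · exact Or.inl ⟨emod_range hn _, by simpa using one_dvd _⟩
        · exact Or.inr ⟨⟨by have := (emod_range hn (z + m n / 2)).1; omega,
            by have := (emod_range hn (z + m n / 2)).2; omega⟩, by simpa using one_dvd _⟩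
        · exact hz
      · exact hz
    · have hM : (a, b) ∉ Mset n := by
        rw [mem_Mset]
        have hodd : ∀ x : ℤ, ((0 ≤ x ∧ x < m n) ∧ (2:ℤ)^σ ∣ x) ∨
            ((m n ≤ x ∧ x < 2*m n) ∧ (2:ℤ)^σ ∣ x - m n - c) → x ∈ Pset n → ¬ Odd x := by
          rintro x (⟨⟨h1, h2⟩, h3⟩ | ⟨⟨h1, h2⟩, h3⟩) hxP hxo
          · have h4 : (2:ℤ) ∣ x := dvd_trans (dvd_pow_self 2 hσ0) h3
            have h5 := Int.odd_iff.mp hxo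
            omega
          · exact absurd hxP.2 (not_lt.2 h1)
        have hHd : ∀ x : ℤ, ((0 ≤ x ∧ x < m n) ∧ (2:ℤ)^σ ∣ x) ∨
            ((m n ≤ x ∧ x < 2*m n) ∧ (2:ℤ)^σ ∣ x - m n - c) → x ∈ Hset n →
              (2:ℤ)^σ ∣ x - m n - c := by
          rintro x (⟨⟨h1, h2⟩, h3⟩ | ⟨⟨h1, h2⟩, h3⟩) hxH
          · exact absurd hxH.1 (not_le.2 h2)
          · exact h3
        have hpar : ∀ x y : ℤ, (2:ℤ)^σ ∣ x - m n - c → (2:ℤ)^σ ∣ y - m n - c →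
            Even x → Odd y → False := by
          intro x y hx hy hex hoy
          have h2 : (2:ℤ) ∣ x - y := by
            have h3 : (2:ℤ)^σ ∣ x - y := by
              have he : x - y = (x - m n - c) - (y - m n - c) := by ring
              rw [he]; exact dvd_sub hx hy
            exact dvd_trans (dvd_pow_self 2 hσ0) h3
          have h4 := Int.even_iff.mp hex
          have h5 := Int.odd_iff.mp hoy
          omega
        rintro (⟨ha1, hb1⟩ | ⟨ha1, hb1⟩ | ⟨ha1, hb1⟩)
        · exact hodd a ha ha1.1 ha1.2
        · rcases hb1 with hb1 | hb1
          · exact hodd b hb hb1.1 hb1.2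
          · exact hpar b a (hHd b hb hb1.1) (hHd a ha ha1.1) hb1.2 ha1.2
        · rcases hb1 with hb1 | hb1
          · exact hodd b hb hb1.1 hb1.2
          · exact hpar a b (hHd a ha ha1.1) (hHd b hb hb1.1) ha1.2 hb1.2
      rw [gyr_eq_id hM z]
      exact hz

end Stmt16Aux

namespace Stmt16Aux

variable {n : ℕ}

/-- Classification of "subgroups" of `P ≃ ℤ/2^(n-1)`. -/
lemma subgroup_class (hn : 3 ≤ n) (S : Set ℤ) (hrange : ∀ x ∈ S, 0 ≤ x ∧ x < m n)
    (h0 : 0 ∈ S) (hadd : ∀ a ∈ S, ∀ b ∈ S, (a + b) % m n ∈ S)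
    (hneg : ∀ a ∈ S, (-a) % m n ∈ S) :
    ∃ s : ℕ, s ≤ n - 1 ∧ ∀ x : ℤ, (x ∈ S ↔ ((0 ≤ x ∧ x < m n) ∧ (2:ℤ)^s ∣ x)) := by
  set S' : AddSubgroup ℤ := {
    carrier := {x : ℤ | x % m n ∈ S}
    zero_mem' := by
      show (0:ℤ) % m n ∈ S
      rw [Int.zero_emod]
      exact h0
    add_mem' := by
      intro x y hx hy
      show (x + y) % m n ∈ S
      rw [Int.add_emod]
      exact hadd _ hx _ hy
    neg_mem' := by
      intro x hx
      show (-x) % m n ∈ S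
      rw [show -x = -(x % m n) + m n * (-(x / m n)) by rw [Int.emod_def]; ring,
        Int.add_mul_emod_self_left]
      exact hneg _ hx } with hS'
  have hmS : m n ∈ S' := by
    show m n % m n ∈ S
    rw [Int.emod_self]
    exact h0
  obtain ⟨g, hg⟩ := Int.subgroup_cyclic S'
  have hgm : g ∣ m n := by
    rw [hg] at hmS
    obtain ⟨k, hk⟩ := AddSubgroup.mem_closure_singleton.mp hmS
    exact ⟨k, by rw [← hk, zsmul_eq_mul]; push_cast; ring⟩
  have hna : g.natAbs ∣ 2 ^ (n - 1) := by
    have h1 := Int.natAbs_dvd_natAbs.mpr hgm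
    have h2 : (m n).natAbs = 2 ^ (n - 1) := by
      show ((2:ℤ) ^ (n-1)).natAbs = 2 ^ (n-1)
      rw [Int.natAbs_pow]
      rfl
    rwa [h2] at h1
  obtain ⟨s, hs, hgs⟩ := (Nat.dvd_prime_pow Nat.prime_two).mp hna
  have key : ∀ y : ℤ, y ∈ S' ↔ (2:ℤ)^s ∣ y := by
    intro y
    rw [hg, AddSubgroup.mem_closure_singleton]
    have h1 : (∃ k : ℤ, k • g = y) ↔ g ∣ y := by
      constructor
      · rintro ⟨k, rfl⟩
        exact ⟨k, by rw [zsmul_eq_mul]; push_cast; ring⟩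
      · rintro ⟨k, rfl⟩
        exact ⟨k, by rw [zsmul_eq_mul]; push_cast; ring⟩
    rw [h1, ← Int.natAbs_dvd, hgs]
    push_cast
    rfl
  refine ⟨s, hs, fun x => ?_⟩
  constructor
  · intro hx
    have hr := hrange x hx
    have hx' : x ∈ S' := by
      show x % m n ∈ S
      rwa [Int.emod_eq_of_lt hr.1 hr.2]
    exact ⟨hr, (key x).mp hx'⟩
  · rintro ⟨⟨h1, h2⟩, hd⟩
    have hx' : x % m n ∈ S := (key x).mpr hd
    rwa [Int.emod_eq_of_lt h1 h2] at hx'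

end Stmt16Aux

open Stmt16Aux

/-- classification of the subgyrogroups of `(G, ⊕)`. -/
theorem stmt16 (n : ℕ) (hn : 3 ≤ n) (K : Set ℤ) (hK : K ⊆ Gset n) :
    IsSubgyrogroup n K ↔
      ((∃ s : ℕ, s ≤ n - 1 ∧ K = {x : ℤ | ∃ k : ℤ, x = (k * 2 ^ s) % m n}) ∨
        (∃ s : ℕ, s ≤ n - 1 ∧ K = {x : ℤ | ∃ k : ℤ, x = (k * 2 ^ s) % m n} ∪
          {x : ℤ | ∃ k : ℤ, x = m n + (k * 2 ^ s) % m n}) ∨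
        (∃ s : ℕ, s ≤ n - 2 ∧ K = {x : ℤ | ∃ k : ℤ, x = (k * 2 ^ (s + 1)) % m n} ∪
          {x : ℤ | ∃ k : ℤ, x = m n + (2 ^ s + k * 2 ^ (s + 1)) % m n})) := by
  constructor
  · intro hsub
    obtain ⟨h0K, hcl, hinv, -⟩ := hsub
    have hm := m_pos hn
    have hGPH : ∀ x ∈ K, x ∈ Pset n ∨ x ∈ Hset n := by
      intro x hx
      have h1 : (0:ℤ) ≤ x := (hK hx).1
      have h2 : x < 2 ^ n := (hK hx).2
      rw [two_pow_n hn] at h2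
      rcases lt_or_ge x (m n) with h | h
      · exact Or.inl ⟨h1, h⟩
      · exact Or.inr ⟨h, h2⟩
    set S : Set ℤ := {x | x ∈ K ∧ 0 ≤ x ∧ x < m n} with hSdef
    have hS0 : 0 ∈ S := ⟨h0K, le_refl 0, hm⟩
    have hSadd : ∀ a ∈ S, ∀ b ∈ S, (a + b) % m n ∈ S := by
      intro a ha b hb
      have h1 := hcl a ha.1 b hb.1
      rw [oplus_PP hn ha.2 hb.2] at h1
      exact ⟨h1, emod_range hn _⟩
    have hSneg : ∀ a ∈ S, (-a) % m n ∈ S := by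
      intro a ha
      obtain ⟨b, hbK, hb0⟩ := hinv a ha.1
      have hbP : b ∈ Pset n := by
        rcases hGPH b hbK with h | h
        · exact h
        · exfalso
          by_cases htw : b ∈ EH n ∧ a ∈ OP n
          · rw [oplus_HP_tw hn htw.1 htw.2] at hb0
            have := (emod_range hn (b + a + m n / 2)).1
            omega
          · rw [oplus_HP hn h ha.2 htw] at hb0
            have := (emod_range hn (b + a)).1
            omega
      rw [oplus_PP hn hbP ha.2] at hb0
      have hbe : b = (-a) % m n := by
        refine eq_of_modeq hn hbP.1 hbP.2 (emod_range hn (-a)).1 (emod_range hn (-a)).2 ?_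
        have h1 : m n ∣ b + a := Int.dvd_of_emod_eq_zero hb0
        have h2 : m n ∣ (-a) % m n - (-a) := dvd_emod_sub dvd_rfl
        have he : b - (-a) % m n = (b + a) - ((-a) % m n - (-a)) := by ring
        rw [he]
        exact dvd_sub h1 h2
      rw [← hbe]
      exact ⟨hbK, hbP⟩
    obtain ⟨s, hs, hchar⟩ := subgroup_class hn S (fun x hx => hx.2) hS0 hSadd hSneg
    by_cases hH : ∀ x ∈ K, x ∈ Pset n
    · refine Or.inl ⟨s, hs, ?_⟩
      rw [charP hn hs]
      ext x
      constructor
      · intro hx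
        exact (hchar x).mp ⟨hx, hH x hx⟩
      · intro hx
        exact ((hchar x).mpr hx).1
    · push_neg at hH
      obtain ⟨h0, h0K', h0nP⟩ := hH
      have h0H : h0 ∈ Hset n := (hGPH h0 h0K').resolve_left h0nP
      have hHH : ∀ x ∈ K, x ∈ Hset n → ∀ y ∈ K, y ∈ Hset n → (2:ℤ)^s ∣ x + y := by
        intro x hxK hxH y hyK hyH
        have hmem : (x + y) % m n ∈ S := by
          by_cases htw : x ∈ EH n ∧ y ∈ OH n
          · have hyx := hcl y hyK x hxK
            have hne : ¬(y ∈ EH n ∧ x ∈ OH n) :=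
              fun hc => (Int.not_odd_iff_even.mpr hc.1.2) htw.2.2
            rw [oplus_HH hn hyH hxH hne, add_comm y x] at hyx
            exact ⟨hyx, emod_range hn _⟩
          · have hxy := hcl x hxK y hyK
            rw [oplus_HH hn hxH hyH htw] at hxy
            exact ⟨hxy, emod_range hn _⟩
        have hd := ((hchar _).mp hmem).2
        have h2 := dvd_emod_sub (x := x + y) (pow_dvd_m hn hs)
        have he : x + y = (x + y) % m n - ((x + y) % m n - (x + y)) := by ring
        rw [he]
        exact dvd_sub hd h2
      have h2h0 : (2:ℤ)^s ∣ 2 * h0 := by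
        have h1 := hHH h0 h0K' h0H h0 h0K' h0H
        rwa [two_mul]
      have hcharH : ∀ x, (x ∈ K ∧ x ∈ Hset n) ↔
          ((m n ≤ x ∧ x < 2 * m n) ∧ (2:ℤ)^s ∣ x - h0) := by
        intro x
        constructor
        · rintro ⟨hxK, hxH⟩
          refine ⟨⟨hxH.1, hxH.2⟩, ?_⟩
          have h1 := hHH x hxK hxH h0 h0K' h0H
          have he : x - h0 = (x + h0) - 2 * h0 := by ring
          rw [he]
          exact dvd_sub h1 h2h0
        · rintro ⟨⟨h1, h2⟩, hd⟩
          refine ⟨?_, h1, h2⟩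
          set p := (x - h0) % m n with hp
          have hpS : p ∈ S := (hchar p).mpr ⟨emod_range hn _, dvd_emod (pow_dvd_m hn hs) hd⟩
          have hx' := hcl p hpS.1 h0 h0K'
          rw [oplus_PH hn hpS.2 h0H] at hx'
          have he : (p + h0) % m n = x - m n := by
            refine eq_of_modeq hn (emod_range hn _).1 (emod_range hn _).2
              (by omega) (by omega) ?_
            have d1 := dvd_emod_sub (x := p + h0) (dvd_refl (m n))
            have d2 := dvd_emod_sub (x := x - h0) (dvd_refl (m n))
            have he2 : (p + h0) % m n - (x - m n) =
                ((p + h0) % m n - (p + h0)) + ((x - h0) % m n - (x - h0)) + m n := by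
              rw [hp]; ring
            rw [he2]
            exact dvd_add (dvd_add d1 d2) dvd_rfl
          rw [he] at hx'
          rwa [show x - m n + m n = x by ring] at hx'
      by_cases ht0 : (2:ℤ)^s ∣ h0 - m n
      · refine Or.inr (Or.inl ⟨s, hs, ?_⟩)
        have e2 : {x : ℤ | ∃ k : ℤ, x = m n + (k * 2 ^ s) % m n}
            = {x : ℤ | (m n ≤ x ∧ x < 2 * m n) ∧ (2:ℤ)^s ∣ x - m n - 0} := by
          rw [← charH hn (pow_dvd_m hn hs) (c := 0)]
          ext x
          simp
        rw [charP hn hs, e2]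
        ext x
        constructor
        · intro hx
          rcases hGPH x hx with h | h
          · exact Or.inl ((hchar x).mp ⟨hx, h⟩)
          · obtain ⟨hr, hd⟩ := (hcharH x).mp ⟨hx, h⟩
            refine Or.inr ⟨hr, ?_⟩
            rw [show x - m n - 0 = (x - h0) + (h0 - m n) by ring]
            exact dvd_add hd ht0
        · rintro (hx | ⟨hr, hd⟩)
          · exact ((hchar x).mpr hx).1
          · refine ((hcharH x).mpr ⟨hr, ?_⟩).1
            rw [show x - h0 = (x - m n - 0) - (h0 - m n) by ring]
            exact dvd_sub hd ht0
      · have hs1 : 1 ≤ s := by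
          rcases Nat.eq_zero_or_pos s with h | h
          · exfalso
            apply ht0
            rw [h, pow_zero]
            exact one_dvd _
          · exact h
        obtain ⟨σ, rfl⟩ : ∃ σ, s = σ + 1 := ⟨s - 1, by omega⟩
        refine Or.inr (Or.inr ⟨σ, by omega, ?_⟩)
        have hσd : (2:ℤ)^σ ∣ h0 - m n := by
          have h2m : (2:ℤ)^(σ+1) ∣ 2 * m n := by
            rw [← two_pow_n hn]
            exact pow_dvd_pow 2 (by omega)
          have h1 : (2:ℤ)^(σ+1) ∣ 2 * (h0 - m n) := by
            rw [show 2 * (h0 - m n) = 2 * h0 - 2 * m n by ring]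
            exact dvd_sub h2h0 h2m
          rw [pow_succ'] at h1
          exact (mul_dvd_mul_iff_left (by norm_num : (2:ℤ) ≠ 0)).mp h1
        obtain ⟨q, hq⟩ := hσd
        have hqodd : Odd q := by
          rcases Int.even_or_odd q with he | ho
          · exfalso
            obtain ⟨r, hr⟩ := he
            exact ht0 ⟨r, by rw [hq, hr]; ring⟩
          · exact ho
        have hdiff : (2:ℤ)^(σ+1) ∣ h0 - m n - 2^σ := by
          obtain ⟨r, hr⟩ := hqodd
          exact ⟨r, by rw [hq, hr]; ring⟩
        have e2 : {x : ℤ | ∃ k : ℤ, x = m n + ((2:ℤ)^σ + k * 2 ^ (σ+1)) % m n}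
            = {x : ℤ | (m n ≤ x ∧ x < 2 * m n) ∧ (2:ℤ)^(σ+1) ∣ x - m n - 2^σ} :=
          charH hn (pow_dvd_m hn hs) (c := (2:ℤ)^σ)
        rw [charP hn hs, e2]
        ext x
        constructor
        · intro hx
          rcases hGPH x hx with h | h
          · exact Or.inl ((hchar x).mp ⟨hx, h⟩)
          · obtain ⟨hr, hd⟩ := (hcharH x).mp ⟨hx, h⟩
            refine Or.inr ⟨hr, ?_⟩
            rw [show x - m n - 2^σ = (x - h0) + (h0 - m n - 2^σ) by ring]
            exact dvd_add hd hdiff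
        · rintro (hx | ⟨hr, hd⟩)
          · exact ((hchar x).mpr hx).1
          · refine ((hcharH x).mpr ⟨hr, ?_⟩).1
            rw [show x - h0 = (x - m n - 2^σ) - (h0 - m n - 2^σ) by ring]
            exact dvd_sub hd hdiff
  · rintro (⟨s, hs, rfl⟩ | ⟨s, hs, rfl⟩ | ⟨s, hs, rfl⟩)
    · rw [charP hn hs]
      exact isSubP hn hs
    · have e2 : {x : ℤ | ∃ k : ℤ, x = m n + (k * 2 ^ s) % m n}
          = {x : ℤ | (m n ≤ x ∧ x < 2 * m n) ∧ (2:ℤ)^s ∣ x - m n - 0} := by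
        rw [← charH hn (pow_dvd_m hn hs) (c := 0)]
        ext x
        simp
      rw [charP hn hs, e2]
      exact isSubU hn hs 0 (by simp)
    · have hs1 : s + 1 ≤ n - 1 := by omega
      have e2 := charH hn (d := (2:ℤ)^(s+1)) (c := (2:ℤ)^s) (pow_dvd_m hn hs1)
      rw [charP hn hs1, e2]
      exact isSubU hn hs1 (2^s) ⟨1, by ring⟩
end
end
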